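/- arXiv:2001.05867 — 6 statements merged into one kernel-verified Lean document; each statement's English description precedes it below -/
import Mathlib

section
/- Let G be a Polish group acting continuously on a Polish space X, and let C ⊆ X be a Borel G-lg comeager set. Then the orbit equivalence relation E^C_G = E^X_G ∩ (C × C) on C is Borel bireducible with E^X_G on X. More precisely, there is a Borel map F : X → C such that for all x, y ∈ X, (x,y) ∈ E^X_G if and only if (F(x), F(y)) ∈ E^X_G, and F(x) lies in the orbit of x for every x. -/
open Set Metric Topology Filter TopologicalSpace

set_option linter.unusedSectionVars false

namespace Stmt4

variable (G : Type*) [MetricSpace G] [CompleteSpace G] [SecondCountableTopology G] [Nonempty G]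

noncomputable def rad (k : ℕ) : ℝ := (1/2 : ℝ)^k

noncomputable def bl (p : ℕ) : Set G := ball (denseSeq G (Nat.unpair p).1) (rad (Nat.unpair p).2)

noncomputable def ssub (j i : ℕ) : Prop :=
  dist (denseSeq G (Nat.unpair j).1) (denseSeq G (Nat.unpair i).1)
    + rad (Nat.unpair j).2 < rad (Nat.unpair i).2

variable {G}

lemma rad_pos (k : ℕ) : 0 < rad k := by unfold rad; positivity

lemma bl_nonempty (p : ℕ) : (bl G p).Nonempty :=
  ⟨_, mem_ball_self (rad_pos _)⟩

lemma isOpen_bl (p : ℕ) : IsOpen (bl G p) := isOpen_ball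

lemma ssub_subset {j i : ℕ} (h : ssub G j i) : bl G j ⊆ bl G i := by
  intro x hx
  have := dist_triangle x (denseSeq G (Nat.unpair j).1) (denseSeq G (Nat.unpair i).1)
  simp only [bl, mem_ball] at hx ⊢
  unfold ssub at h
  linarith

lemma ssub_closure {j i : ℕ} (h : ssub G j i) : closure (bl G j) ⊆ bl G i := by
  intro x hx
  have hx' : x ∈ closedBall (denseSeq G (Nat.unpair j).1) (rad (Nat.unpair j).2) :=
    closure_ball_subset_closedBall hx
  simp only [mem_closedBall] at hx'
  have := dist_triangle x (denseSeq G (Nat.unpair j).1) (denseSeq G (Nat.unpair i).1)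
  simp only [bl, mem_ball]
  unfold ssub at h
  linarith

lemma exists_rad_lt {ε : ℝ} (hε : 0 < ε) : ∃ k, rad k < ε := by
  obtain ⟨k, hk⟩ := exists_pow_lt_of_lt_one hε (by norm_num : (1/2 : ℝ) < 1)
  exact ⟨k, hk⟩

/-- basic ball existence: around any point, arbitrarily small balls with controlled closure -/
lemma exists_bl_basic (g : G) {ε : ℝ} (hε : 0 < ε) :
    ∃ j, g ∈ bl G j ∧ dist (denseSeq G (Nat.unpair j).1) g + 2 * rad (Nat.unpair j).2 < ε := by
  obtain ⟨k, hk⟩ := exists_rad_lt (by linarith : (0:ℝ) < ε/3)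
  obtain ⟨i, hi⟩ := (Metric.denseRange_iff.1 (denseRange_denseSeq G)) g _ (rad_pos k)
  refine ⟨Nat.pair i k, ?_, ?_⟩ <;> simp only [bl, Nat.unpair_pair, mem_ball]
  · exact hi
  · rw [dist_comm] at hi; linarith

/-- find a small ball around g strongly inside two given balls and inside an open set -/
lemma exists_bl_lt {g : G} {i i' : ℕ} (hgi : g ∈ bl G i) (hgi' : g ∈ bl G i')
    {O : Set G} (hO : IsOpen O) (hgO : g ∈ O) {ε : ℝ} (hε : 0 < ε) :
    ∃ j, g ∈ bl G j ∧ ssub G j i ∧ ssub G j i' ∧ bl G j ⊆ O ∧ rad (Nat.unpair j).2 < ε := by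
  obtain ⟨δ, hδ, hδO⟩ := Metric.isOpen_iff.1 hO g hgO
  simp only [bl, mem_ball] at hgi hgi'
  set a := rad (Nat.unpair i).2 - dist g (denseSeq G (Nat.unpair i).1) with ha
  set a' := rad (Nat.unpair i').2 - dist g (denseSeq G (Nat.unpair i').1) with ha'
  have hε0 : 0 < min (min a a') (min δ ε) := by
    apply lt_min (lt_min (by linarith) (by linarith)) (lt_min hδ hε)
  obtain ⟨j, hj, hjs⟩ := exists_bl_basic g hε0
  have h1 : dist (denseSeq G (Nat.unpair j).1) g + 2 * rad (Nat.unpair j).2 < min a a' :=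
    lt_of_lt_of_le hjs (min_le_left _ _)
  have h2 : dist (denseSeq G (Nat.unpair j).1) g + 2 * rad (Nat.unpair j).2 < min δ ε :=
    lt_of_lt_of_le hjs (min_le_right _ _)
  have h1a : dist (denseSeq G (Nat.unpair j).1) g + 2 * rad (Nat.unpair j).2 < a :=
    lt_of_lt_of_le h1 (min_le_left _ _)
  have h1a' : dist (denseSeq G (Nat.unpair j).1) g + 2 * rad (Nat.unpair j).2 < a' :=
    lt_of_lt_of_le h1 (min_le_right _ _)
  have h2δ : dist (denseSeq G (Nat.unpair j).1) g + 2 * rad (Nat.unpair j).2 < δ :=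
    lt_of_lt_of_le h2 (min_le_left _ _)
  have h2ε : dist (denseSeq G (Nat.unpair j).1) g + 2 * rad (Nat.unpair j).2 < ε :=
    lt_of_lt_of_le h2 (min_le_right _ _)
  have hrj := rad_pos (Nat.unpair j).2
  have hdj : (0:ℝ) ≤ dist (denseSeq G (Nat.unpair j).1) g := dist_nonneg
  refine ⟨j, hj, ?_, ?_, ?_, by linarith⟩
  · unfold ssub
    have := dist_triangle (denseSeq G (Nat.unpair j).1) g (denseSeq G (Nat.unpair i).1)
    linarith
  · unfold ssub
    have := dist_triangle (denseSeq G (Nat.unpair j).1) g (denseSeq G (Nat.unpair i').1)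
    linarith
  · intro x hx
    apply hδO
    simp only [bl, mem_ball] at hx
    have := dist_triangle x (denseSeq G (Nat.unpair j).1) g
    simp only [mem_ball]
    rw [dist_comm (denseSeq G (Nat.unpair j).1) g] at *
    linarith

lemma isOpen_eq_empty_of_isMeagre {s : Set G} (ho : IsOpen s) (hm : IsMeagre s) : s = ∅ := by
  have hd : Dense sᶜ := dense_of_mem_residual hm
  rw [eq_empty_iff_forall_notMem]
  intro x hx
  obtain ⟨y, hy1, hy2⟩ := hd.inter_open_nonempty s ho ⟨x, hx⟩
  exact hy2 hy1

lemma not_isMeagre_bl (p : ℕ) : ¬ IsMeagre (bl G p) := by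
  intro h
  have := isOpen_eq_empty_of_isMeagre (isOpen_bl p) h
  exact absurd (this ▸ bl_nonempty p) (by simp)

/-- meagerness of symmetric-difference pieces from residual eq -/
lemma diff_meagre_of_residualEq {S O : Set G} (h : S =ᶠ[residual G] O) :
    IsMeagre (S \ O) ∧ IsMeagre (O \ S) := by
  have hM : IsMeagre {x | ¬ ((x ∈ S) = (x ∈ O))} := by
    unfold IsMeagre
    rw [compl_setOf]
    simp only [not_not]
    exact h
  constructor <;> refine hM.mono ?_ <;> intro x hx <;>
    simp only [mem_diff, mem_setOf_eq] at hx ⊢ <;>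
    · intro he
      rw [eq_iff_iff] at he
      tauto

lemma isMeagre_union {s t : Set G} (hs : IsMeagre s) (ht : IsMeagre t) :
    IsMeagre (s ∪ t) := by
  rw [IsMeagre, compl_union]
  exact Filter.inter_mem hs ht

/-- BP localization: if S is nonmeager in bl v, then S is comeager in some small sub-ball -/
lemma loc {S : Set G} (hS : BaireMeasurableSet S) {v : ℕ} (h : ¬ IsMeagre (S ∩ bl G v)) :
    ∃ j, ssub G j v ∧ IsMeagre (Sᶜ ∩ bl G j) := by
  obtain ⟨O, hO, heq⟩ := hS.residualEq_isOpen
  obtain ⟨h1, h2⟩ := diff_meagre_of_residualEq heq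
  have hOv : (O ∩ bl G v).Nonempty := by
    by_contra hne
    rw [not_nonempty_iff_eq_empty] at hne
    apply h
    refine h1.mono ?_
    rintro x ⟨hxS, hxv⟩
    simp only [mem_diff]
    refine ⟨hxS, fun hxO => ?_⟩
    have : x ∈ O ∩ bl G v := ⟨hxO, hxv⟩
    rw [hne] at this
    exact this
  obtain ⟨g, hgO, hgv⟩ := hOv
  obtain ⟨j, _, hjv, _, hjO, _⟩ := exists_bl_lt hgv hgv hO hgO one_pos
  refine ⟨j, hjv, h2.mono ?_⟩
  rintro x ⟨hxS, hxj⟩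
  exact ⟨hjO hxj, hxS⟩

/-- duality: Sᶜ meager in bl v iff S is nonmeager in every strong sub-ball -/
lemma dual {S : Set G} (hS : BaireMeasurableSet S) (v : ℕ) :
    IsMeagre (Sᶜ ∩ bl G v) ↔ ∀ j, ssub G j v → ¬ IsMeagre (S ∩ bl G j) := by
  constructor
  · intro h j hjv hSj
    apply not_isMeagre_bl (G := G) j
    have : bl G j ⊆ (S ∩ bl G j) ∪ (Sᶜ ∩ bl G j) := by
      intro x hx
      by_cases hxS : x ∈ S
      · exact Or.inl ⟨hxS, hx⟩
      · exact Or.inr ⟨hxS, hx⟩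
    refine IsMeagre.mono this ?_
    exact isMeagre_union hSj (h.mono (show Sᶜ ∩ bl G j ⊆ Sᶜ ∩ bl G v from fun x hx => ⟨hx.1, ssub_subset hjv hx.2⟩))
  · intro h
    by_contra hc
    obtain ⟨j, hjv, hj⟩ := loc hS.compl hc
    rw [compl_compl] at hj
    exact h j hjv hj

section Action

variable {X : Type*} [TopologicalSpace X] [MeasurableSpace X] [BorelSpace X]
  [SMul G X] [ContinuousSMul G X] [MeasurableSpace G] [BorelSpace G]

variable (G) in
/-- the G-section of a subset of X at a point x -/
def sec (T : Set X) (x : X) : Set G := {g | g • x ∈ T}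

lemma continuous_rho (x : X) : Continuous (fun g : G => g • x) :=
  continuous_id.smul continuous_const

lemma sec_borel {T : Set X} (hT : MeasurableSet T) (x : X) : MeasurableSet (sec G T x) :=
  (continuous_rho x).measurable hT

lemma sec_baire {T : Set X} (hT : MeasurableSet T) (x : X) : BaireMeasurableSet (sec G T x) :=
  (sec_borel hT x).baireMeasurableSet

lemma sec_compl (T : Set X) (x : X) : sec G Tᶜ x = (sec G T x)ᶜ := rfl

lemma sec_iUnion (T : ℕ → Set X) (x : X) : sec G (⋃ n, T n) x = ⋃ n, sec G (T n) x := by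
  ext g; simp [sec]

variable (G) in
/-- Q T : existence of uniformly Borel "dense open kernel scheme" for the sections of T,
relative to every ball where the section is comeager. -/
def QQ (T : Set X) : Prop := ∃ k : X → ℕ → ℕ → ℕ → Prop,
  (∀ v m n, MeasurableSet {x | k x v m n}) ∧
  (∀ x v m n, k x v m n → bl G n ⊆ bl G v) ∧
  (∀ x v, IsMeagre ((sec G T x)ᶜ ∩ bl G v) →
    (∀ m, bl G v ⊆ closure (⋃ n ∈ {n | k x v m n}, bl G n)) ∧
    ((bl G v ∩ ⋂ m, ⋃ n ∈ {n | k x v m n}, bl G n) ⊆ sec G T x))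

variable (G) in
def PP (T : Set X) : Prop := MeasurableSet T ∧
  (∀ v : ℕ, MeasurableSet {x | IsMeagre (sec G T x ∩ bl G v)}) ∧
  (∀ v : ℕ, MeasurableSet {x | IsMeagre ((sec G T x)ᶜ ∩ bl G v)}) ∧
  QQ G T ∧ QQ G Tᶜ

/-- measurability of the comeager predicate follows from that of the meager predicate -/
lemma meas_c2 {T : Set X} (hT : MeasurableSet T)
    (h1 : ∀ v : ℕ, MeasurableSet {x | IsMeagre (sec G T x ∩ bl G v)}) :
    ∀ v : ℕ, MeasurableSet {x | IsMeagre ((sec G T x)ᶜ ∩ bl G v)} := by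
  intro v
  have : {x | IsMeagre ((sec G T x)ᶜ ∩ bl G v)}
      = ⋂ j ∈ {j | ssub G j v}, {x | IsMeagre (sec G T x ∩ bl G j)}ᶜ := by
    ext x
    simp only [mem_iInter, mem_setOf_eq, mem_compl_iff]
    exact dual (sec_baire hT x) v
  rw [this]
  exact MeasurableSet.biInter (to_countable _) (fun j _ => (h1 j).compl)

lemma PP_compl {T : Set X} (h : PP G T) : PP G Tᶜ := by
  obtain ⟨hm, h1, h2, hq1, hq2⟩ := h
  refine ⟨hm.compl, ?_, ?_, hq2, ?_⟩
  · intro v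
    simpa only [sec_compl] using h2 v
  · intro v
    simp only [sec_compl, compl_compl]
    exact h1 v
  · rw [compl_compl]
    exact hq1

lemma PP_empty : PP G (∅ : Set X) := by
  refine ⟨MeasurableSet.empty, ?_, ?_, ?_, ?_⟩
  · intro v
    have : {x : X | IsMeagre (sec G (∅ : Set X) x ∩ bl G v)} = univ := by
      ext x
      have hs : sec G (∅ : Set X) x = ∅ := by
        ext g; simp [sec]
      simp only [mem_univ, iff_true, mem_setOf_eq, hs, empty_inter]
      exact IsMeagre.empty
    rw [this]; exact MeasurableSet.univ
  · intro v
    have : {x : X | IsMeagre ((sec G (∅ : Set X) x)ᶜ ∩ bl G v)} = ∅ := by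
      ext x
      simp only [mem_empty_iff_false, iff_false, mem_setOf_eq]
      intro h
      apply not_isMeagre_bl (G := G) v
      refine h.mono ?_
      intro g hg
      exact ⟨by simp [sec], hg⟩
    rw [this]; exact MeasurableSet.empty
  · -- QQ ∅ : hypothesis is impossible
    refine ⟨fun _ _ _ _ => False, by simp, by simp, ?_⟩
    intro x v h
    exfalso
    apply not_isMeagre_bl (G := G) v
    refine h.mono ?_
    intro g hg
    exact ⟨by simp [sec], hg⟩
  · -- QQ univ : take all balls strongly inside bl v
    refine ⟨fun _ v _ n => ssub G n v, fun v m n => ?_, ?_, ?_⟩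
    · by_cases h : ssub G n v <;> simp [h]
    · intro x v m n h
      exact ssub_subset h
    · intro x v _
      constructor
      · intro m g hg
        apply subset_closure
        obtain ⟨j, hgj, hjv, _, _, _⟩ := exists_bl_lt hg hg isOpen_univ (mem_univ g) one_pos
        exact mem_biUnion hjv hgj
      · intro g _
        simp [sec]

variable (G) in
/-- greedy disjoint selection of balls: accept candidate j if condition c holds and its ball
is disjoint from all previously accepted balls. `(Nat.unpair j).1` is the ball index. -/
def acc (c : ℕ → X → Prop) (j : ℕ) (x : X) : Prop :=
  c j x ∧ ∀ j' : ℕ, j' < j → acc c j' x →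
    Disjoint (bl G (Nat.unpair j').1) (bl G (Nat.unpair j).1)
termination_by j

lemma acc_iff (c : ℕ → X → Prop) (j : ℕ) (x : X) :
    acc G c j x ↔ (c j x ∧ ∀ j' : ℕ, j' < j → acc G c j' x →
      Disjoint (bl G (Nat.unpair j').1) (bl G (Nat.unpair j).1)) := by
  rw [acc]

lemma acc_meas {c : ℕ → X → Prop} (hc : ∀ j, MeasurableSet {x | c j x}) (j : ℕ) :
    MeasurableSet {x | acc G c j x} := by
  induction j using Nat.strong_induction_on with
  | _ j ih =>
    have : {x | acc G c j x} = {x | c j x} ∩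
        ⋂ j' ∈ Finset.range j, ({x | acc G c j' x}ᶜ ∪
          {x | Disjoint (bl G (Nat.unpair j').1) (bl G (Nat.unpair j).1)}) := by
      ext x
      simp only [acc_iff (G := G) c j x, mem_inter_iff, mem_setOf_eq, mem_iInter, Finset.mem_range,
        mem_union, mem_compl_iff]
      constructor
      · rintro ⟨h1, h2⟩
        exact ⟨h1, fun j' hj' => by
          by_cases ha : acc G c j' x
          · exact Or.inr (h2 j' hj' ha)
          · exact Or.inl ha⟩
      · rintro ⟨h1, h2⟩
        refine ⟨h1, fun j' hj' ha => ?_⟩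
        rcases h2 j' hj' with h | h
        · exact absurd ha h
        · exact h
    rw [this]
    refine (hc j).inter (MeasurableSet.biInter (to_countable _) (fun j' hj' => ?_))
    refine ((ih j' (Finset.mem_range.1 hj')).compl.union ?_)
    by_cases hd : Disjoint (bl G (Nat.unpair j').1) (bl G (Nat.unpair j).1) <;>
      simp [hd]

lemma acc_disjoint {c : ℕ → X → Prop} {j j' : ℕ} {x : X} (h : acc G c j x)
    (h' : acc G c j' x) (hne : j ≠ j') :
    Disjoint (bl G (Nat.unpair j).1) (bl G (Nat.unpair j').1) := by
  rcases lt_or_gt_of_ne hne with hlt | hlt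
  · exact ((acc_iff (G := G) c j' x).1 h').2 j hlt h
  · exact (((acc_iff (G := G) c j x).1 h).2 j' hlt h').symm

lemma acc_hit {c : ℕ → X → Prop} {j : ℕ} {x : X} (h : c j x) :
    ∃ j', acc G c j' x ∧ ¬ Disjoint (bl G (Nat.unpair j').1) (bl G (Nat.unpair j).1) := by
  induction j using Nat.strong_induction_on with
  | _ j ih =>
    by_cases ha : acc G c j x
    · refine ⟨j, ha, ?_⟩
      rw [Set.not_disjoint_iff]
      obtain ⟨g, hg⟩ := bl_nonempty (G := G) (Nat.unpair j).1
      exact ⟨g, hg, hg⟩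
    · rw [acc_iff] at ha
      push_neg at ha
      obtain ⟨j', hj1, hj2, hj3⟩ := ha h
      exact ⟨j', hj2, hj3⟩

lemma QQ_iUnion {T : ℕ → Set X} (hP : ∀ i, PP G (T i)) : QQ G (⋃ i, T i) := by
  have hQ : ∀ i, QQ G (T i) := fun i => (hP i).2.2.2.1
  choose k hk1 hk2 hk3 using hQ
  let c : ℕ → ℕ → X → Prop := fun v j x =>
    IsMeagre ((sec G (T (Nat.unpair j).2) x)ᶜ ∩ bl G (Nat.unpair j).1) ∧
      bl G (Nat.unpair j).1 ⊆ bl G v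
  have hcmeas : ∀ v j, MeasurableSet {x | c v j x} := by
    intro v j
    have : {x | c v j x} = {x | IsMeagre ((sec G (T (Nat.unpair j).2) x)ᶜ ∩ bl G (Nat.unpair j).1)}
        ∩ {x | bl G (Nat.unpair j).1 ⊆ bl G v} := rfl
    rw [this]
    refine ((hP (Nat.unpair j).2).2.2.1 (Nat.unpair j).1).inter ?_
    by_cases h : bl G (Nat.unpair j).1 ⊆ bl G v <;> simp [h]
  refine ⟨fun x v m n => ∃ j, acc G (c v) j x ∧ k (Nat.unpair j).2 x (Nat.unpair j).1 m n,
    ?_, ?_, ?_⟩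
  · intro v m n
    have : {x | ∃ j, acc G (c v) j x ∧ k (Nat.unpair j).2 x (Nat.unpair j).1 m n}
        = ⋃ j, ({x | acc G (c v) j x} ∩ {x | k (Nat.unpair j).2 x (Nat.unpair j).1 m n}) := by
      ext x; simp only [mem_iUnion, mem_inter_iff, mem_setOf_eq]
    rw [this]
    exact MeasurableSet.iUnion (fun j => (acc_meas (G := G) (hcmeas v) j).inter (hk1 _ _ _ _))
  · rintro x v m n ⟨j, hacc, hkj⟩
    exact (hk2 _ _ _ _ _ hkj).trans ((acc_iff (G := G) _ _ _).1 hacc).1.2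
  · intro x v hcom
    have key : ∀ u, ssub G u v →
        ∃ j', acc G (c v) j' x ∧ (bl G (Nat.unpair j').1 ∩ bl G u).Nonempty := by
      intro u huv
      have h1 : ¬ IsMeagre (sec G (⋃ i, T i) x ∩ bl G u) := by
        intro hme
        apply not_isMeagre_bl (G := G) u
        have hsub : bl G u ⊆ (sec G (⋃ i, T i) x ∩ bl G u) ∪
            ((sec G (⋃ i, T i) x)ᶜ ∩ bl G u) := by
          intro g hg; by_cases hgs : g ∈ sec G (⋃ i, T i) x
          · exact Or.inl ⟨hgs, hg⟩
          · exact Or.inr ⟨hgs, hg⟩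
        refine IsMeagre.mono hsub (isMeagre_union hme (hcom.mono ?_))
        exact inter_subset_inter_right _ (ssub_subset huv)
      have h2 : ∃ i, ¬ IsMeagre (sec G (T i) x ∩ bl G u) := by
        by_contra hall
        push_neg at hall
        apply h1
        rw [sec_iUnion, iUnion_inter]
        exact isMeagre_iUnion hall
      obtain ⟨i, hi⟩ := h2
      obtain ⟨w, hwu, hw⟩ := loc (sec_baire (hP i).1 x) hi
      have hc : c v (Nat.pair w i) x := by
        constructor
        · simpa [Nat.unpair_pair] using hw
        · rw [Nat.unpair_pair]
          exact (ssub_subset hwu).trans (ssub_subset huv)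
      obtain ⟨j', hj1, hj2⟩ := acc_hit (G := G) hc
      rw [Set.not_disjoint_iff] at hj2
      obtain ⟨g0, hg1, hg2⟩ := hj2
      refine ⟨j', hj1, ⟨g0, hg1, ?_⟩⟩
      rw [Nat.unpair_pair] at hg2
      exact ssub_subset hwu hg2
    constructor
    · -- density
      intro m g hg
      rw [Metric.mem_closure_iff]
      intro ε hε
      obtain ⟨u, hgu, huv, _, huball, _⟩ :=
        exists_bl_lt hg hg isOpen_ball (mem_ball_self hε) one_pos
      obtain ⟨j', hacc, ⟨g0, hg01, hg02⟩⟩ := key u huv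
      have hcj : IsMeagre ((sec G (T (Nat.unpair j').2) x)ᶜ ∩ bl G (Nat.unpair j').1) :=
        ((acc_iff (G := G) _ _ _).1 hacc).1.1
      have hdense := (hk3 (Nat.unpair j').2 x (Nat.unpair j').1 hcj).1 m
      have hg0cl : g0 ∈ closure (⋃ n ∈ {n | k (Nat.unpair j').2 x (Nat.unpair j').1 m n}, bl G n) :=
        hdense hg01
      rw [_root_.mem_closure_iff] at hg0cl
      obtain ⟨p, hp1, hp2⟩ := hg0cl ((bl G u) ∩ (bl G (Nat.unpair j').1))
        ((isOpen_bl u).inter (isOpen_bl _)) ⟨hg02, hg01⟩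
      simp only [mem_iUnion, mem_setOf_eq, exists_prop] at hp2
      obtain ⟨n, hn, hpn⟩ := hp2
      refine ⟨p, ?_, ?_⟩
      · simp only [mem_iUnion, mem_setOf_eq, exists_prop]
        exact ⟨n, ⟨j', hacc, hn⟩, hpn⟩
      · have : p ∈ ball g ε := huball hp1.1
        rw [mem_ball, dist_comm] at this
        exact this
    · -- kernel property
      rintro g ⟨hgv, hgU⟩
      rw [mem_iInter] at hgU
      have h0 := hgU 0
      simp only [mem_iUnion, mem_setOf_eq, exists_prop] at h0
      obtain ⟨n0, ⟨j0, hacc0, hk0⟩, hgn0⟩ := h0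
      have hgw0 : g ∈ bl G (Nat.unpair j0).1 := hk2 _ _ _ _ _ hk0 hgn0
      have hall : ∀ m, g ∈ ⋃ n ∈ {n | k (Nat.unpair j0).2 x (Nat.unpair j0).1 m n}, bl G n := by
        intro m
        have hm := hgU m
        simp only [mem_iUnion, mem_setOf_eq, exists_prop] at hm
        obtain ⟨n, ⟨jm, haccm, hkm⟩, hgn⟩ := hm
        have hgwm : g ∈ bl G (Nat.unpair jm).1 := hk2 _ _ _ _ _ hkm hgn
        have hjm : jm = j0 := by
          by_contra hne
          exact (Set.disjoint_left.1 (acc_disjoint (G := G) haccm hacc0 hne)) hgwm hgw0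
        rw [hjm] at hkm
        simp only [mem_iUnion, mem_setOf_eq, exists_prop]
        exact ⟨n, hkm, hgn⟩
      have hcj : IsMeagre ((sec G (T (Nat.unpair j0).2) x)ᶜ ∩ bl G (Nat.unpair j0).1) :=
        ((acc_iff (G := G) _ _ _).1 hacc0).1.1
      have hsec := (hk3 (Nat.unpair j0).2 x (Nat.unpair j0).1 hcj).2
        ⟨hgw0, mem_iInter.2 hall⟩
      rw [sec_iUnion]
      exact mem_iUnion.2 ⟨(Nat.unpair j0).2, hsec⟩

lemma QQ_iUnion_compl {T : ℕ → Set X} (hP : ∀ i, PP G (T i)) : QQ G (⋃ i, T i)ᶜ := by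
  have hQ : ∀ i, QQ G (T i)ᶜ := fun i => (hP i).2.2.2.2
  choose k hk1 hk2 hk3 using hQ
  refine ⟨fun x v m n => k (Nat.unpair m).1 x v (Nat.unpair m).2 n, fun v m n => hk1 _ _ _ _,
    fun x v m n h => hk2 _ _ _ _ _ h, ?_⟩
  intro x v hcom
  have hyp : ∀ i, IsMeagre ((sec G (T i)ᶜ x)ᶜ ∩ bl G v) := by
    intro i
    rw [sec_compl, compl_compl]
    refine hcom.mono (inter_subset_inter_left _ ?_)
    rw [sec_compl, compl_compl, sec_iUnion]
    intro g hg
    exact mem_iUnion.2 ⟨i, hg⟩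
  constructor
  · intro m
    exact (hk3 (Nat.unpair m).1 x v (hyp _)).1 (Nat.unpair m).2
  · rintro g ⟨hgv, hgU⟩
    rw [mem_iInter] at hgU
    rw [sec_compl, sec_iUnion]
    simp only [mem_compl_iff, mem_iUnion, not_exists]
    intro i hgi
    have : g ∈ sec G (T i)ᶜ x := by
      refine (hk3 i x v (hyp i)).2 ⟨hgv, mem_iInter.2 fun m2 => ?_⟩
      have h := hgU (Nat.pair i m2)
      simpa only [Nat.unpair_pair] using h
    rw [sec_compl, mem_compl_iff] at this
    exact this hgi

lemma PP_iUnion {T : ℕ → Set X} (hP : ∀ i, PP G (T i)) : PP G (⋃ i, T i) := by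
  have hm : MeasurableSet (⋃ i, T i) := MeasurableSet.iUnion (fun i => (hP i).1)
  have hc1 : ∀ v : ℕ, MeasurableSet {x | IsMeagre (sec G (⋃ i, T i) x ∩ bl G v)} := by
    intro v
    have : {x | IsMeagre (sec G (⋃ i, T i) x ∩ bl G v)}
        = ⋂ i, {x | IsMeagre (sec G (T i) x ∩ bl G v)} := by
      ext x
      simp only [mem_iInter, mem_setOf_eq]
      constructor
      · intro h i
        refine h.mono (inter_subset_inter_left _ ?_)
        rw [sec_iUnion]
        intro g hg
        exact mem_iUnion.2 ⟨i, hg⟩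
      · intro h
        rw [sec_iUnion, iUnion_inter]
        exact isMeagre_iUnion h
    rw [this]
    exact MeasurableSet.iInter (fun i => (hP i).2.1 v)
  exact ⟨hm, hc1, meas_c2 hm hc1, QQ_iUnion hP, QQ_iUnion_compl hP⟩

lemma sec_open {T : Set X} (hT : IsOpen T) (x : X) : IsOpen (sec G T x) :=
  hT.preimage (continuous_rho x)

lemma PP_open {T : Set X} (hT : IsOpen T) : PP G T := by
  have hc1 : ∀ v : ℕ, MeasurableSet {x | IsMeagre (sec G T x ∩ bl G v)} := by
    intro v
    have hopen : IsOpen {x : X | ∃ g ∈ bl G v, g • x ∈ T} := by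
      have : {x : X | ∃ g ∈ bl G v, g • x ∈ T} = ⋃ g ∈ bl G v, (fun x : X => g • x) ⁻¹' T := by
        ext x; simp
      rw [this]
      exact isOpen_biUnion fun g _ => hT.preimage (continuous_const.smul continuous_id)
    have heq : {x | IsMeagre (sec G T x ∩ bl G v)} = {x : X | ∃ g ∈ bl G v, g • x ∈ T}ᶜ := by
      ext x
      simp only [mem_setOf_eq, mem_compl_iff, not_exists]
      constructor
      · rintro h g ⟨hgv, hgT⟩
        have := isOpen_eq_empty_of_isMeagre ((sec_open hT x).inter (isOpen_bl v)) h
        rw [eq_empty_iff_forall_notMem] at this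
        exact this g ⟨hgT, hgv⟩
      · intro h
        have : sec G T x ∩ bl G v = ∅ := by
          rw [eq_empty_iff_forall_notMem]
          rintro g ⟨hgT, hgv⟩
          exact h g ⟨hgv, hgT⟩
        rw [this]
        exact IsMeagre.empty
    rw [heq]
    exact hopen.measurableSet.compl
  have hQ : QQ G T := by
    classical
    refine ⟨fun x v m n => ssub G n v ∧
      ∃ jj, ssub G n jj ∧ x ∈ interior {x' | ∀ g ∈ bl G jj, g • x' ∈ T}, ?_, ?_, ?_⟩
    · intro v m n
      by_cases hnv : ssub G n v
      · have : {x : X | ssub G n v ∧ ∃ jj, ssub G n jj ∧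
            x ∈ interior {x' | ∀ g ∈ bl G jj, g • x' ∈ T}}
            = ⋃ jj, ({x : X | ssub G n jj} ∩ interior {x' | ∀ g ∈ bl G jj, g • x' ∈ T}) := by
          ext x
          simp only [mem_iUnion, mem_inter_iff, mem_setOf_eq, hnv, true_and]
        rw [this]
        refine MeasurableSet.iUnion fun jj => MeasurableSet.inter ?_ isOpen_interior.measurableSet
        by_cases h : ssub G n jj <;> simp [h]
      · have : {x : X | ssub G n v ∧ ∃ jj, ssub G n jj ∧
            x ∈ interior {x' | ∀ g ∈ bl G jj, g • x' ∈ T}} = ∅ := by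
          rw [eq_empty_iff_forall_notMem]
          rintro x ⟨h, _⟩
          exact hnv h
        rw [this]
        exact MeasurableSet.empty
    · rintro x v m n ⟨hnv, _⟩
      exact ssub_subset hnv
    · intro x v hcom
      constructor
      · -- density
        intro m g hg
        rw [Metric.mem_closure_iff]
        intro ε hε
        obtain ⟨u, hgu, huv, _, huball, _⟩ :=
          exists_bl_lt hg hg isOpen_ball (mem_ball_self hε) one_pos
        have hne : (sec G T x ∩ bl G u).Nonempty := by
          by_contra hemp
          rw [not_nonempty_iff_eq_empty] at hemp
          apply not_isMeagre_bl (G := G) u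
          have hsub : bl G u ⊆ (sec G T x)ᶜ ∩ bl G v := by
            intro h hh
            refine ⟨fun hs => ?_, ssub_subset huv hh⟩
            rw [eq_empty_iff_forall_notMem] at hemp
            exact hemp h ⟨hs, hh⟩
          exact (hcom.mono hsub).mono (fun y hy => hy)
        obtain ⟨g1, hg1T, hg1u⟩ := hne
        have hS : IsOpen ((fun p : G × X => p.1 • p.2) ⁻¹' T) := hT.preimage continuous_smul
        have hmem : (g1, x) ∈ (fun p : G × X => p.1 • p.2) ⁻¹' T := hg1T
        obtain ⟨A, B, hA, hB, hg1A, hxB, hsub⟩ := isOpen_prod_iff.1 hS g1 x hmem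
        obtain ⟨jj, hg1jj, _, _, hjjA, _⟩ := exists_bl_lt hg1u hg1u hA hg1A one_pos
        have hBW : B ⊆ {x' | ∀ g ∈ bl G jj, g • x' ∈ T} := by
          intro x' hx' g hgjj
          exact hsub (Set.mk_mem_prod (hjjA hgjj) hx')
        have hxint : x ∈ interior {x' | ∀ g ∈ bl G jj, g • x' ∈ T} :=
          interior_maximal hBW hB hxB
        have hg1v : g1 ∈ bl G v := ssub_subset huv hg1u
        obtain ⟨n, hg1n, hnjj, hnv, _, _⟩ := exists_bl_lt hg1jj hg1v isOpen_univ (mem_univ g1) one_pos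
        refine ⟨g1, ?_, ?_⟩
        · simp only [mem_iUnion, mem_setOf_eq, exists_prop]
          exact ⟨n, ⟨hnv, jj, hnjj, hxint⟩, hg1n⟩
        · have : g1 ∈ ball g ε := huball hg1u
          rw [mem_ball, dist_comm] at this
          exact this
      · -- kernel
        rintro g ⟨hgv, hgU⟩
        rw [mem_iInter] at hgU
        have h0 := hgU 0
        simp only [mem_iUnion, mem_setOf_eq, exists_prop] at h0
        obtain ⟨n, ⟨_, jj, hnjj, hxint⟩, hgn⟩ := h0
        have hW : x ∈ {x' | ∀ g ∈ bl G jj, g • x' ∈ T} := interior_subset hxint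
        exact hW g (ssub_subset hnjj hgn)
  have hQc : QQ G Tᶜ := by
    refine ⟨fun _ v _ n => ssub G n v, fun v m n => by
      by_cases h : ssub G n v <;> simp [h], fun x v m n h => ssub_subset h, ?_⟩
    intro x v hcom
    have hbv : bl G v ⊆ sec G Tᶜ x := by
      rw [sec_compl, compl_compl] at hcom
      have := isOpen_eq_empty_of_isMeagre ((sec_open hT x).inter (isOpen_bl v)) hcom
      rw [eq_empty_iff_forall_notMem] at this
      intro g hgv
      rw [sec_compl, mem_compl_iff]
      intro hgT
      exact this g ⟨hgT, hgv⟩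
    constructor
    · intro m g hg
      apply subset_closure
      obtain ⟨j, hgj, hjv, _, _, _⟩ := exists_bl_lt hg hg isOpen_univ (mem_univ g) one_pos
      simp only [mem_iUnion, mem_setOf_eq, exists_prop]
      exact ⟨j, hjv, hgj⟩
    · rintro g ⟨hgv, _⟩
      exact hbv hgv
  exact ⟨hT.measurableSet, hc1, meas_c2 hT.measurableSet hc1, hQ, hQc⟩

lemma PP_of_measurableSet {T : Set X} (hT : MeasurableSet T) : PP G T := by
  have h : @MeasurableSet X (MeasurableSpace.generateFrom {s : Set X | IsOpen s}) T := by
    have heq2 : (inferInstance : MeasurableSpace X)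
        = MeasurableSpace.generateFrom {s : Set X | IsOpen s} := BorelSpace.measurable_eq (α := X)
    exact heq2 ▸ hT
  exact MeasurableSpace.generateFrom_induction {s : Set X | IsOpen s}
    (fun s _ => PP G s) (fun t ht _ => PP_open ht) PP_empty
    (fun t _ hp => PP_compl hp) (fun f _ hp => PP_iUnion hp) T h

open Classical in
variable (G) in
noncomputable def seqI (K : X → ℕ → ℕ → ℕ → Prop) (j0 vs : ℕ) : ℕ → X → ℕ
  | 0 => fun _ => j0
  | (k+1) => fun x =>
    if h : ∃ p : ℕ, K x vs k (Nat.unpair p).2 ∧ ssub G (Nat.unpair p).1 (Nat.unpair p).2 ∧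
        ssub G (Nat.unpair p).1 (seqI K j0 vs k x) ∧
        rad (Nat.unpair (Nat.unpair p).1).2 < (1/2 : ℝ)^k
    then (Nat.unpair (Nat.find h)).1 else 0

lemma seqI_zero (K : X → ℕ → ℕ → ℕ → Prop) (j0 vs : ℕ) (x : X) :
    seqI G K j0 vs 0 x = j0 := rfl

open Classical in
lemma seqI_succ (K : X → ℕ → ℕ → ℕ → Prop) (j0 vs k : ℕ) (x : X) :
    seqI G K j0 vs (k+1) x =
    if h : ∃ p : ℕ, K x vs k (Nat.unpair p).2 ∧ ssub G (Nat.unpair p).1 (Nat.unpair p).2 ∧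
        ssub G (Nat.unpair p).1 (seqI G K j0 vs k x) ∧
        rad (Nat.unpair (Nat.unpair p).1).2 < (1/2 : ℝ)^k
    then (Nat.unpair (Nat.find h)).1 else 0 := rfl

lemma exists_selector {CC : Set X} (hB : MeasurableSet CC)
    (hres : ∀ x : X, IsMeagre ((sec G CC x)ᶜ)) :
    ∃ s : X → G, Measurable s ∧ ∀ x, s x • x ∈ CC := by
  classical
  obtain ⟨K, hK1, hK2, hK3⟩ := (PP_of_measurableSet (G := G) hB).2.2.2.1
  set vs : ℕ := Nat.pair 0 0 with hvs
  set j0 : ℕ := Nat.pair 0 3 with hj0def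
  have hj0 : ssub G j0 vs := by
    simp only [ssub, hvs, hj0def, Nat.unpair_pair, dist_self, rad]
    norm_num
  have hcom : ∀ x, IsMeagre ((sec G CC x)ᶜ ∩ bl G vs) :=
    fun x => (hres x).mono inter_subset_left
  have hmain := fun x => hK3 x vs (hcom x)
  set I : ℕ → X → ℕ := seqI G K j0 vs with hIdef
  set cond : ℕ → X → ℕ → Prop := fun k x p =>
    K x vs k (Nat.unpair p).2 ∧ ssub G (Nat.unpair p).1 (Nat.unpair p).2 ∧
      ssub G (Nat.unpair p).1 (I k x) ∧
      rad (Nat.unpair (Nat.unpair p).1).2 < (1/2 : ℝ)^k with hconddef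
  have hexists : ∀ k x, bl G (I k x) ⊆ bl G vs → ∃ p, cond k x p := by
    intro k x hsub
    have hcen : denseSeq G (Nat.unpair (I k x)).1 ∈ bl G (I k x) := mem_ball_self (rad_pos _)
    have hcl : denseSeq G (Nat.unpair (I k x)).1 ∈
        closure (⋃ n ∈ {n | K x vs k n}, bl G n) := (hmain x).1 k (hsub hcen)
    rw [_root_.mem_closure_iff] at hcl
    obtain ⟨g1, hg1I, hg1U⟩ := hcl (bl G (I k x)) (isOpen_bl _) hcen
    simp only [mem_iUnion, mem_setOf_eq, exists_prop] at hg1U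
    obtain ⟨n, hKn, hg1n⟩ := hg1U
    obtain ⟨j, _, hjn, hjI, _, hjrad⟩ :=
      exists_bl_lt hg1n hg1I isOpen_univ (mem_univ g1) (by positivity : (0:ℝ) < (1/2:ℝ)^k)
    exact ⟨Nat.pair j n, by
      rw [hconddef]
      simp only [Nat.unpair_pair]
      exact ⟨hKn, hjn, hjI, hjrad⟩⟩
  -- invariant and existence for all k
  have hEx : ∀ k, (∀ x, bl G (I k x) ⊆ bl G vs) ∧ (∀ x, ∃ p, cond k x p) := by
    intro k
    induction k with
    | zero =>
      refine ⟨fun x => ?_, fun x => hexists 0 x ?_⟩ <;>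
        · show bl G (seqI G K j0 vs 0 x) ⊆ bl G vs
          rw [seqI_zero]
          exact ssub_subset hj0
    | succ k ih =>
      have hstep : ∀ x, bl G (I (k+1) x) ⊆ bl G (I k x) := by
        intro x
        have hfind : I (k+1) x = (Nat.unpair (Nat.find (ih.2 x))).1 := by
          show seqI G K j0 vs (k+1) x = _
          rw [seqI_succ, dif_pos (ih.2 x)]
        have hs := Nat.find_spec (ih.2 x)
        simp only [hconddef] at hs
        simp only [hfind]
        exact ssub_subset hs.2.2.1
      refine ⟨fun x => (hstep x).trans (ih.1 x), fun x => hexists (k+1) x ((hstep x).trans (ih.1 x))⟩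
  have hfind : ∀ k x, I (k+1) x = (Nat.unpair (Nat.find ((hEx k).2 x))).1 := by
    intro k x
    show seqI G K j0 vs (k+1) x = _
    rw [seqI_succ, dif_pos ((hEx k).2 x)]
  have hprops : ∀ k x, ssub G (I (k+1) x) (I k x) ∧
      (∃ n, K x vs k n ∧ ssub G (I (k+1) x) n) ∧
      rad (Nat.unpair (I (k+1) x)).2 < (1/2 : ℝ)^k := by
    intro k x
    have hspec := Nat.find_spec ((hEx k).2 x)
    simp only [hconddef] at hspec
    simp only [hfind k x]
    exact ⟨hspec.2.2.1, ⟨(Nat.unpair (Nat.find ((hEx k).2 x))).2, hspec.1, hspec.2.1⟩, hspec.2.2.2⟩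
  -- measurability of the index functions
  have hImeas : ∀ k, Measurable (I k) := by
    intro k
    induction k with
    | zero =>
      show Measurable (seqI G K j0 vs 0)
      have : seqI G K j0 vs 0 = fun _ => j0 := rfl
      rw [this]
      exact measurable_const
    | succ k ih =>
      have hcondmeas : ∀ p, MeasurableSet {x | cond k x p} := by
        intro p
        rw [hconddef]
        have : {x | K x vs k (Nat.unpair p).2 ∧ ssub G (Nat.unpair p).1 (Nat.unpair p).2 ∧
            ssub G (Nat.unpair p).1 (I k x) ∧
            rad (Nat.unpair (Nat.unpair p).1).2 < (1/2 : ℝ)^k}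
            = {x | K x vs k (Nat.unpair p).2} ∩ ({x | ssub G (Nat.unpair p).1 (Nat.unpair p).2}
              ∩ ((I k ⁻¹' {i | ssub G (Nat.unpair p).1 i})
                ∩ {x | rad (Nat.unpair (Nat.unpair p).1).2 < (1/2 : ℝ)^k})) := by
          ext x
          simp only [mem_inter_iff, mem_setOf_eq, mem_preimage]
        rw [this]
        refine (hK1 _ _ _).inter (MeasurableSet.inter ?_ ((ih trivial).inter ?_))
        · by_cases h : ssub G (Nat.unpair p).1 (Nat.unpair p).2 <;> simp [h]
        · by_cases h : rad (Nat.unpair (Nat.unpair p).1).2 < (1/2 : ℝ)^k <;> simp [h]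
      have hfindmeas : Measurable (fun x => Nat.find ((hEx k).2 x)) := by
        refine measurable_to_countable' (fun p => ?_)
        have : (fun x => Nat.find ((hEx k).2 x)) ⁻¹' {p}
            = {x | cond k x p} ∩ ⋂ q ∈ Finset.range p, {x | cond k x q}ᶜ := by
          ext x
          simp only [mem_preimage, mem_singleton_iff, mem_inter_iff, mem_setOf_eq, mem_iInter,
            Finset.mem_range, mem_compl_iff, Nat.find_eq_iff]
          try tauto
        rw [this]
        exact (hcondmeas p).inter (MeasurableSet.biInter (to_countable _)
          (fun q _ => (hcondmeas q).compl))
      have : I (k+1) = (fun p => (Nat.unpair p).1) ∘ (fun x => Nat.find ((hEx k).2 x)) := by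
        funext x
        exact hfind k x
      rw [this]
      exact measurable_from_top.comp hfindmeas
  -- chain of inclusions
  have hchain : ∀ x k m, k ≤ m → bl G (I m x) ⊆ bl G (I k x) := by
    intro x k m hkm
    induction m, hkm using Nat.le_induction with
    | base => exact subset_rfl
    | succ m hkm ih => exact (ssub_subset (hprops m x).1).trans ih
  -- the centers
  set f : ℕ → X → G := fun k x => denseSeq G (Nat.unpair (I k x)).1 with hfdef
  have hfmeas : ∀ k, Measurable (f k) := fun k =>
    (show Measurable fun i : ℕ => denseSeq G (Nat.unpair i).1 from measurable_from_top).comp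
      (hImeas k)
  have hdist : ∀ x k, dist (f k x) (f (k+1) x) ≤ 2 * (1/2 : ℝ)^k := by
    intro x k
    have hin : f (k+1) x ∈ bl G (I k x) :=
      ssub_subset (hprops k x).1 (mem_ball_self (rad_pos _))
    rw [bl, mem_ball] at hin
    rw [dist_comm]
    have hrad : rad (Nat.unpair (I k x)).2 ≤ 2 * (1/2 : ℝ)^k := by
      cases k with
      | zero =>
        have : I 0 x = j0 := rfl
        rw [this, hj0def]
        simp only [Nat.unpair_pair, rad]
        norm_num
      | succ k =>
        have := (hprops k x).2.2
        have h2 : (1/2 : ℝ)^k = 2 * (1/2 : ℝ)^(k+1) := by ring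
        linarith [h2 ▸ this]
    linarith
  have hcauchy : ∀ x, CauchySeq (fun k => f k x) := by
    intro x
    exact cauchySeq_of_le_geometric (1/2) 2 (by norm_num) (hdist x)
  have hlim : ∀ x, ∃ l, Tendsto (fun k => f k x) atTop (𝓝 l) :=
    fun x => cauchySeq_tendsto_of_complete (hcauchy x)
  set s : X → G := fun x => (hlim x).choose with hsdef
  have htend : ∀ x, Tendsto (fun k => f k x) atTop (𝓝 (s x)) := fun x => (hlim x).choose_spec
  have hsmeas : Measurable s :=
    measurable_of_tendsto_metrizable' atTop hfmeas (tendsto_pi_nhds.2 htend)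
  refine ⟨s, hsmeas, fun x => ?_⟩
  have hmem : ∀ k, s x ∈ bl G (I k x) := by
    intro k
    have hcl : s x ∈ closure (bl G (I (k+1) x)) := by
      refine mem_closure_of_tendsto (htend x) ?_
      rw [eventually_atTop]
      exact ⟨k+1, fun m hm => hchain x (k+1) m hm (mem_ball_self (rad_pos _))⟩
    exact ssub_closure (hprops k x).1 hcl
  have hsx : s x ∈ sec G CC x := by
    refine (hmain x).2 ⟨(hEx 0).1 x (hmem 0), mem_iInter.2 (fun m => ?_)⟩
    obtain ⟨n, hKn, hssub⟩ := (hprops m x).2.1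
    simp only [mem_iUnion, mem_setOf_eq, exists_prop]
    exact ⟨n, hKn, ssub_subset hssub (hmem (m+1))⟩
  exact hsx

end Action

end Stmt4

theorem stmt4 {G X : Type*} [Group G] [TopologicalSpace G] [IsTopologicalGroup G]
    [PolishSpace G] [TopologicalSpace X] [PolishSpace X] [MulAction G X]
    [ContinuousSMul G X] [MeasurableSpace X] [BorelSpace X] (C : Set X)
    (hCBorel : MeasurableSet C)
    (hC : ∀ x : X, {g : G | g • x ∈ C} ∈ residual G) :
    ∃ F : X → X, Measurable F ∧ (∀ x : X, F x ∈ C) ∧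
      (∀ x : X, ∃ g : G, g • x = F x) ∧
      (∀ x y : X, (∃ g : G, g • x = y) ↔ (∃ g : G, g • F x = F y)) := by
  letI := upgradeIsCompletelyMetrizable G
  borelize G
  haveI : Nonempty G := ⟨1⟩
  have hres : ∀ x : X, IsMeagre ((Stmt4.sec G C x)ᶜ) := by
    intro x
    rw [IsMeagre, compl_compl]
    exact hC x
  obtain ⟨s, hs, hsC⟩ := Stmt4.exists_selector hCBorel hres
  refine ⟨fun x => s x • x, ?_, fun x => hsC x, fun x => ⟨s x, rfl⟩, ?_⟩
  · have hsm : Measurable fun p : G × X => p.1 • p.2 := continuous_smul.measurable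
    exact hsm.comp (hs.prodMk measurable_id)
  · intro x y
    constructor
    · rintro ⟨g, rfl⟩
      refine ⟨s (g • x) * g * (s x)⁻¹, ?_⟩
      simp only [mul_smul, inv_smul_smul]
    · rintro ⟨g, hg⟩
      refine ⟨(s y)⁻¹ * (g * s x), ?_⟩
      have : ((s y)⁻¹ * (g * s x)) • x = (s y)⁻¹ • (g • (s x • x)) := by
        simp only [mul_smul]
      rw [this, hg, inv_smul_smul]
end

section
/- Let G be a group, V ⊆ G a symmetric subset invariant under conjugation, and suppose a set C_i in a G-set X is V-lacunary (g·x = y for g ∈ V, x,y ∈ C_i implies x = y). Fix g ∈ G and let C_{i+1} = C_i ∪ (g·C_i \ V·C_i). Then C_{i+1} is V-lacunary, provided the action restricted to C_i is free enough that h·x₀ = y₀ with h ∈ V and x₀, y₀ ∈ C_i forces x₀ = y₀. -/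
open Pointwise

/-- The algebraic inductive step: `C ∪ (g·C \ V·C)` is `V`-lacunary whenever `C` is,
for `V` symmetric and conjugacy-invariant. -/
theorem stmt7 {G X : Type*} [Group G] [MulAction G X]
    (V : Set G) (hVsym : V⁻¹ = V)
    (hVconj : ∀ h : G, ∀ v ∈ V, h * v * h⁻¹ ∈ V)
    (C : Set X)
    (hlac : ∀ x ∈ C, ∀ y ∈ C, ∀ v ∈ V, v • x = y → x = y)
    (g : G) :
    ∀ x ∈ C ∪ (g • C \ V • C), ∀ y ∈ C ∪ (g • C \ V • C), ∀ v ∈ V,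
      v • x = y → x = y := by
  rintro x (hx | ⟨hx, hxV⟩) y (hy | ⟨hy, hyV⟩) v hv hvxy
  · exact hlac x hx y hy v hv hvxy
  · exact absurd ⟨v, hv, x, hx, hvxy⟩ hyV
  · refine absurd ⟨v⁻¹, ?_, y, hy, by simp [← hvxy]⟩ hxV
    rw [← hVsym]; exact Set.inv_mem_inv.mpr hv
  · obtain ⟨x₀, hx₀, rfl⟩ := hx
    obtain ⟨y₀, hy₀, rfl⟩ := hy
    have hconj : g⁻¹ * v * g ∈ V := by
      have := hVconj g⁻¹ v hv
      simpa using this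
    have : (g⁻¹ * v * g) • x₀ = y₀ := by
      have := congrArg (fun z => g⁻¹ • z) hvxy
      simpa [mul_smul] using this
    rw [hlac x₀ hx₀ y₀ hy₀ _ hconj this]
end

section
/- Let G be a group acting on a set X, let V ⊆ G be symmetric with V = V^{-1}. Fix a countable dense subset {g_i} of G (G a topological group, V open). Define C_0 = B, C_{i+1} = C_i ∪ (g_i·C_i \ V·C_i), C = ⋃_i C_i. If B meets every orbit of the action, then V·V·C = X. -/
open Pointwise

/-- The covering step: if `B` is a complete section, `{gᵢ}` is dense and `V` an open
symmetric neighbourhood of `1`, then the inductively defined `C = ⋃ Cᵢ` satisfies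
`V·V·C = X`. -/
theorem stmt8 {G X : Type*} [Group G] [TopologicalSpace G] [IsTopologicalGroup G]
    [MulAction G X] (V : Set G) (hVopen : IsOpen V) (hV1 : (1 : G) ∈ V)
    (hVsym : V⁻¹ = V) (g : ℕ → G) (hdense : DenseRange g)
    (B : Set X) (hBcomplete : ∀ x : X, ∃ y ∈ B, ∃ h : G, h • y = x)
    (Cseq : ℕ → Set X) (h0 : Cseq 0 = B)
    (hsucc : ∀ i : ℕ, Cseq (i + 1) = Cseq i ∪ (g i • Cseq i \ V • Cseq i)) :
    V • (V • ⋃ i, Cseq i) = Set.univ := by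
  have hmono : ∀ i, B ⊆ Cseq i := by
    intro i
    induction i with
    | zero => rw [h0]
    | succ n ih => rw [hsucc n]; exact ih.trans Set.subset_union_left
  apply Set.eq_univ_of_forall
  intro x
  obtain ⟨y, hy, h, hx⟩ := hBcomplete x
  -- find i with g i * h⁻¹ ∈ V
  have hUopen : IsOpen ((· * h⁻¹) ⁻¹' V) :=
    hVopen.preimage (continuous_mul_right h⁻¹)
  have hUne : ((· * h⁻¹) ⁻¹' V).Nonempty := ⟨h, by simp [hV1]⟩
  obtain ⟨i, hi⟩ := hdense.exists_mem_open hUopen hUne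
  have hi' : g i * h⁻¹ ∈ V := hi
  have hinv : h * (g i)⁻¹ ∈ V := by
    rw [← hVsym]
    simpa using Set.inv_mem_inv.mpr hi'
  set z := g i • y with hz
  have hxz : (h * (g i)⁻¹) • z = x := by
    rw [hz, smul_smul, mul_assoc, inv_mul_cancel, mul_one, hx]
  have hzC : z ∈ V • ⋃ j, Cseq j := by
    by_cases hcase : z ∈ V • Cseq i
    · obtain ⟨v, hv, w, hw, hvw⟩ := hcase
      exact ⟨v, hv, w, Set.mem_iUnion.mpr ⟨i, hw⟩, hvw⟩
    · have hz1 : z ∈ Cseq (i + 1) := by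
        rw [hsucc i]
        exact Or.inr ⟨⟨y, hmono i hy, rfl⟩, hcase⟩
      exact ⟨1, hV1, z, Set.mem_iUnion.mpr ⟨i + 1, hz1⟩, one_smul _ _⟩
  exact ⟨h * (g i)⁻¹, hinv, z, hzC, hxz⟩
end

section
/- Let G be a Polish group acting continuously on a Polish space X, and let F ⊆ E^X_G be a Borel equivalence relation such that every G-orbit contains at most countably many F-classes. Then the orbit equivalence relation E^X_G is Borel. -/
open Set Filter Topology TopologicalSpace

section CategoryLemmas

variable {α : Type*} [TopologicalSpace α]

lemma myIsMeagre_union {s t : Set α} (hs : IsMeagre s) (ht : IsMeagre t) :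
    IsMeagre (s ∪ t) := by
  rw [IsMeagre, compl_union]
  exact Filter.inter_mem hs ht

lemma myIsMeagre_biUnion {ι : Type*} {S : Set ι} (hS : S.Countable) {f : ι → Set α}
    (h : ∀ i ∈ S, IsMeagre (f i)) : IsMeagre (⋃ i ∈ S, f i) := by
  rw [IsMeagre, compl_iUnion₂]
  exact (countable_bInter_mem hS).mpr h

lemma isMeagre_diff_of_eventuallyEq {s u : Set α} (h : s =ᵇ u) : IsMeagre (u \ s) := by
  rw [IsMeagre]
  filter_upwards [Filter.eventuallyEq_set.mp h] with x hx
  exact fun hmem => hmem.2 (hx.mpr hmem.1)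

lemma not_isMeagre_inter_iff [BaireSpace α] {s U : Set α} (hs : BaireMeasurableSet s)
    (hU : IsOpen U) :
    ¬ IsMeagre (U ∩ s) ↔ ∃ V : Set α, IsOpen V ∧ V.Nonempty ∧ V ⊆ U ∧ IsMeagre (V \ s) := by
  constructor
  · intro h
    obtain ⟨u, huo, heq⟩ := (hU.baireMeasurableSet.inter hs).residualEq_isOpen
    have h1 : IsMeagre (u \ (U ∩ s)) := isMeagre_diff_of_eventuallyEq heq
    have h2 : IsMeagre ((U ∩ s) \ u) := isMeagre_diff_of_eventuallyEq heq.symm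
    have hune : u.Nonempty := by
      rcases eq_empty_or_nonempty u with rfl | hne
      · exact absurd (h2.mono (by simp)) h
      · exact hne
    have hsubcl : u ⊆ closure U := by
      by_contra hcon
      rw [not_subset] at hcon
      obtain ⟨x, hxu, hxc⟩ := hcon
      refine not_isMeagre_of_isOpen (huo.inter isClosed_closure.isOpen_compl) ⟨x, hxu, hxc⟩
        (h1.mono ?_)
      rintro z ⟨hz1, hz2⟩
      exact ⟨hz1, fun hz3 => hz2 (subset_closure hz3.1)⟩
    obtain ⟨x, hxu⟩ := hune
    obtain ⟨y, hyu, hyU⟩ := mem_closure_iff.mp (hsubcl hxu) u huo hxu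
    refine ⟨u ∩ U, huo.inter hU, ⟨y, hyu, hyU⟩, inter_subset_right, h1.mono ?_⟩
    rintro z ⟨⟨hz1, hz2⟩, hz3⟩
    exact ⟨hz1, fun hz4 => hz3 hz4.2⟩
  · rintro ⟨V, hVo, hVne, hVU, hVm⟩ hM
    refine not_isMeagre_of_isOpen hVo hVne ((myIsMeagre_union hVm hM).mono ?_)
    intro x hx
    by_cases hxs : x ∈ s
    · exact Or.inr ⟨hVU hx, hxs⟩
    · exact Or.inl ⟨hx, hxs⟩

lemma not_isMeagre_inter_iff_basis [BaireSpace α] {b : Set (Set α)}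
    (hb : IsTopologicalBasis b) {s U : Set α} (hs : BaireMeasurableSet s) (hU : IsOpen U) :
    ¬ IsMeagre (U ∩ s) ↔ ∃ V ∈ b, V.Nonempty ∧ V ⊆ U ∧ IsMeagre (V \ s) := by
  rw [not_isMeagre_inter_iff hs hU]
  constructor
  · rintro ⟨V, hVo, ⟨x, hxV⟩, hVU, hVm⟩
    obtain ⟨W, hWb, hxW, hWV⟩ := hb.exists_subset_of_mem_open hxV hVo
    exact ⟨W, hWb, ⟨x, hxW⟩, hWV.trans hVU, hVm.mono (diff_subset_diff_left hWV)⟩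
  · rintro ⟨V, hVb, hVne, hVU, hVm⟩
    exact ⟨V, hb.isOpen hVb, hVne, hVU, hVm⟩

lemma isMeagre_inter_iff_basis [BaireSpace α] {b : Set (Set α)}
    (hb : IsTopologicalBasis b) {s U : Set α} (hs : BaireMeasurableSet s) (hU : IsOpen U) :
    IsMeagre (U ∩ s) ↔ ∀ V ∈ b, V.Nonempty → V ⊆ U → ¬ IsMeagre (V \ s) := by
  constructor
  · intro hM V hVb hVne hVU hVm
    exact (not_isMeagre_inter_iff_basis hb hs hU).mpr ⟨V, hVb, hVne, hVU, hVm⟩ hM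
  · intro hall
    by_contra hM
    obtain ⟨V, hVb, hVne, hVU, hVm⟩ := (not_isMeagre_inter_iff_basis hb hs hU).mp hM
    exact hall V hVb hVne hVU hVm

lemma not_isMeagre_prod {α β : Type*} [TopologicalSpace α] [TopologicalSpace β]
    [BaireSpace α] [BaireSpace β] [BaireSpace (α × β)]
    {A : Set α} {B : Set β} (hA : BaireMeasurableSet A) (hB : BaireMeasurableSet B)
    (hAn : ¬ IsMeagre A) (hBn : ¬ IsMeagre B) : ¬ IsMeagre (A ×ˢ B) := by
  have hA' : ¬ IsMeagre (univ ∩ A) := by simpa using hAn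
  have hB' : ¬ IsMeagre (univ ∩ B) := by simpa using hBn
  obtain ⟨U, hUo, hUne, -, hUA⟩ := (not_isMeagre_inter_iff hA isOpen_univ).mp hA'
  obtain ⟨V, hVo, hVne, -, hVB⟩ := (not_isMeagre_inter_iff hB isOpen_univ).mp hB'
  intro hm
  have m1 : IsMeagre (Prod.fst ⁻¹' (U \ A) : Set (α × β)) :=
    hUA.preimage_of_isOpenMap continuous_fst isOpenMap_fst
  have m2 : IsMeagre (Prod.snd ⁻¹' (V \ B) : Set (α × β)) :=
    hVB.preimage_of_isOpenMap continuous_snd isOpenMap_snd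
  refine not_isMeagre_of_isOpen (hUo.prod hVo) (hUne.prod hVne)
    ((myIsMeagre_union (myIsMeagre_union m1 m2) hm).mono ?_)
  rintro ⟨x, y⟩ ⟨hxU, hyV⟩
  by_cases hxA : x ∈ A
  · by_cases hyB : y ∈ B
    · exact Or.inr ⟨hxA, hyB⟩
    · exact Or.inl (Or.inr ⟨hyV, hyB⟩)
  · exact Or.inl (Or.inl ⟨hxU, hxA⟩)

end CategoryLemmas

section Quantifier

variable {Z Y W : Type*} [TopologicalSpace Z] [BaireSpace Z] [SecondCountableTopology Z]
  [MeasurableSpace Y] [TopologicalSpace W] [MeasurableSpace W] [BorelSpace W]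

/-- Category quantifier theorem: for Borel `F`, the set of `y` such that the section
`{z | m z y ∈ F}` is comeager in `U` is measurable. -/
theorem measurableSet_comeagerIn (m : Z → Y → W) (hc : ∀ y, Continuous fun z => m z y)
    (hm : ∀ z, Measurable (m z)) {F : Set W} (hF : MeasurableSet F) :
    ∀ U : Set Z, IsOpen U → MeasurableSet {y | IsMeagre (U \ {z | m z y ∈ F})} := by
  borelize Z
  obtain ⟨b, hbc, -, hb⟩ := exists_countable_basis Z
  obtain ⟨D, hDc, hDd⟩ := exists_countable_dense Z
  have hsec : ∀ (F : Set W), MeasurableSet F → ∀ y, BaireMeasurableSet {z | m z y ∈ F} :=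
    fun F hF y => (((hc y).measurable) hF).baireMeasurableSet
  refine MeasurableSet.induction_on_open
    (C := fun F _ => ∀ U : Set Z, IsOpen U →
      MeasurableSet {y | IsMeagre (U \ {z | m z y ∈ F})}) ?_ ?_ ?_ _ hF
  · -- open case
    intro F hFo U hU
    have key : ∀ y, IsMeagre (U \ {z | m z y ∈ F}) ↔
        ∀ V ∈ b, V.Nonempty → V ⊆ U → ∃ d ∈ D ∩ V, m d y ∈ F := by
      intro y
      have hopen : IsOpen {z | m z y ∈ F} := hFo.preimage (hc y)
      rw [diff_eq, isMeagre_inter_iff_basis hb hopen.baireMeasurableSet.compl hU]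
      refine forall₂_congr fun V hVb => ?_
      refine imp_congr_right fun hVne => imp_congr_right fun hVU => ?_
      rw [diff_compl]
      constructor
      · intro hnm
        rcases (V ∩ {z | m z y ∈ F}).eq_empty_or_nonempty with he | hne
        · exact absurd (he ▸ IsMeagre.empty) hnm
        · obtain ⟨d, hdD, hdV⟩ := hDd.exists_mem_open ((hb.isOpen hVb).inter hopen) hne
          exact ⟨d, ⟨hdD, hdV.1⟩, hdV.2⟩
      · rintro ⟨d, ⟨hdD, hdV⟩, hdF⟩
        exact not_isMeagre_of_isOpen ((hb.isOpen hVb).inter hopen) ⟨d, hdV, hdF⟩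
    have heq : {y | IsMeagre (U \ {z | m z y ∈ F})} =
        ⋂ V ∈ {V | V ∈ b ∧ V.Nonempty ∧ V ⊆ U}, ⋃ d ∈ D ∩ V, {y | m d y ∈ F} := by
      ext y
      simp only [mem_setOf_eq, key y, mem_iInter, mem_iUnion, exists_prop]
      exact ⟨fun h V hV => h V hV.1 hV.2.1 hV.2.2,
        fun h V hVb hVne hVU => h V ⟨hVb, hVne, hVU⟩⟩
    rw [heq]
    exact MeasurableSet.biInter (hbc.mono fun V hV => hV.1) fun V _ =>
      MeasurableSet.biUnion (hDc.mono inter_subset_left) fun d _ => (hm d) hFo.measurableSet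
  · -- complement case
    intro F hFm IH U hU
    have key : ∀ y, U \ {z | m z y ∈ Fᶜ} = U ∩ {z | m z y ∈ F} := by
      intro y; ext z; simp [diff_eq]
    have heq : {y | IsMeagre (U \ {z | m z y ∈ Fᶜ})} =
        ⋂ V ∈ {V | V ∈ b ∧ V.Nonempty ∧ V ⊆ U}, {y | IsMeagre (V \ {z | m z y ∈ F})}ᶜ := by
      ext y
      rw [mem_setOf_eq, key y, isMeagre_inter_iff_basis hb (hsec F hFm y) hU]
      simp only [mem_iInter, mem_compl_iff, mem_setOf_eq]
      exact ⟨fun h V hV => h V hV.1 hV.2.1 hV.2.2,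
        fun h V hVb hVne hVU => h V ⟨hVb, hVne, hVU⟩⟩
    rw [heq]
    exact MeasurableSet.biInter (hbc.mono fun V hV => hV.1)
      fun V hV => (IH V (hb.isOpen hV.1)).compl
  · -- union case
    intro f _ hfm IH U hU
    have hsecu : ∀ y, {z | m z y ∈ ⋃ n, f n} = ⋃ n, {z | m z y ∈ f n} := by
      intro y; ext z; simp
    have key : ∀ y, IsMeagre (U \ {z | m z y ∈ ⋃ n, f n}) ↔
        ∀ V ∈ b, V.Nonempty → V ⊆ U →
          ∃ n : ℕ, ∃ W ∈ b, W.Nonempty ∧ W ⊆ V ∧ IsMeagre (W \ {z | m z y ∈ f n}) := by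
      intro y
      rw [hsecu y, diff_eq,
        isMeagre_inter_iff_basis hb
          ((BaireMeasurableSet.iUnion fun n => hsec (f n) (hfm n) y).compl) hU]
      refine forall₂_congr fun V hVb => ?_
      refine imp_congr_right fun hVne => imp_congr_right fun hVU => ?_
      rw [diff_compl]
      constructor
      · intro hnm
        have hne : ¬ IsMeagre (⋃ n, V ∩ {z | m z y ∈ f n}) := by
          rwa [inter_iUnion] at hnm
        have hex : ∃ n, ¬ IsMeagre (V ∩ {z | m z y ∈ f n}) := by
          by_contra hall
          push_neg at hall
          exact hne (isMeagre_iUnion hall)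
        obtain ⟨n, hn⟩ := hex
        obtain ⟨W, hWb, hWne, hWV, hWm⟩ :=
          (not_isMeagre_inter_iff_basis hb (hsec (f n) (hfm n) y) (hb.isOpen hVb)).mp hn
        exact ⟨n, W, hWb, hWne, hWV, hWm⟩
      · rintro ⟨n, W, hWb, hWne, hWV, hWm⟩ hM
        refine not_isMeagre_of_isOpen (hb.isOpen hWb) hWne
          ((myIsMeagre_union hWm hM).mono ?_)
        intro z hz
        by_cases hzn : m z y ∈ f n
        · exact Or.inr ⟨hWV hz, mem_iUnion.mpr ⟨n, hzn⟩⟩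
        · exact Or.inl ⟨hz, hzn⟩
    have heq : {y | IsMeagre (U \ {z | m z y ∈ ⋃ n, f n})} =
        ⋂ V ∈ {V | V ∈ b ∧ V.Nonempty ∧ V ⊆ U}, ⋃ n : ℕ,
          ⋃ W ∈ {W | W ∈ b ∧ W.Nonempty ∧ W ⊆ V},
            {y | IsMeagre (W \ {z | m z y ∈ f n})} := by
      ext y
      rw [mem_setOf_eq, key y]
      simp only [mem_iInter, mem_iUnion, exists_prop, mem_setOf_eq]
      constructor
      · intro h V hV
        obtain ⟨n, W, hWb, hWne, hWV, hWm⟩ := h V hV.1 hV.2.1 hV.2.2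
        exact ⟨n, W, ⟨hWb, hWne, hWV⟩, hWm⟩
      · intro h V hVb hVne hVU
        obtain ⟨n, W, ⟨hWb, hWne, hWV⟩, hWm⟩ := h V ⟨hVb, hVne, hVU⟩
        exact ⟨n, W, hWb, hWne, hWV, hWm⟩
    rw [heq]
    refine MeasurableSet.biInter (hbc.mono fun V hV => hV.1) fun V _ =>
      MeasurableSet.iUnion fun n =>
        MeasurableSet.biUnion (hbc.mono fun W hW => hW.1) fun W hW =>
          IH n W (hb.isOpen hW.1)

/-- The set of `y` whose section `{z | m z y ∈ F}` is non-meager is measurable. -/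
theorem measurableSet_nonmeagerSection (m : Z → Y → W) (hc : ∀ y, Continuous fun z => m z y)
    (hm : ∀ z, Measurable (m z)) {F : Set W} (hF : MeasurableSet F) :
    MeasurableSet {y | ¬ IsMeagre {z | m z y ∈ F}} := by
  borelize Z
  obtain ⟨b, hbc, -, hb⟩ := exists_countable_basis Z
  have hsec : ∀ y, BaireMeasurableSet {z | m z y ∈ F} :=
    fun y => (((hc y).measurable) hF).baireMeasurableSet
  have key : ∀ y, (¬ IsMeagre {z | m z y ∈ F}) ↔
      ∃ V ∈ b, V.Nonempty ∧ IsMeagre (V \ {z | m z y ∈ F}) := by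
    intro y
    rw [show {z | m z y ∈ F} = univ ∩ {z | m z y ∈ F} from (univ_inter _).symm,
      not_isMeagre_inter_iff_basis hb (hsec y) isOpen_univ]
    simp only [univ_inter, subset_univ, true_and]
  have heq : {y | ¬ IsMeagre {z | m z y ∈ F}} =
      ⋃ V ∈ {V | V ∈ b ∧ V.Nonempty}, {y | IsMeagre (V \ {z | m z y ∈ F})} := by
    ext y
    simp only [mem_setOf_eq, key y, mem_iUnion, exists_prop]
    exact ⟨fun ⟨V, h1, h2, h4⟩ => ⟨V, ⟨h1, h2⟩, h4⟩,
      fun ⟨V, ⟨h1, h2⟩, h4⟩ => ⟨V, h1, h2, h4⟩⟩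
  rw [heq]
  exact MeasurableSet.biUnion (hbc.mono fun V hV => hV.1) fun V hV =>
    measurableSet_comeagerIn m hc hm hF V (hb.isOpen hV.1)

end Quantifier

/-- Proposition 3 of the paper: if a Borel equivalence relation `F` contained in the
orbit equivalence relation has at most countably many classes in each orbit, then
the orbit equivalence relation is Borel. -/
theorem stmt10 {G X : Type*} [Group G] [TopologicalSpace G] [IsTopologicalGroup G]
    [PolishSpace G] [TopologicalSpace X] [PolishSpace X] [MulAction G X]
    [ContinuousSMul G X] [MeasurableSpace X] [BorelSpace X]
    (F : Set (X × X)) (hFBorel : MeasurableSet F)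
    (hFrefl : ∀ x : X, (x, x) ∈ F)
    (hFsymm : ∀ x y : X, (x, y) ∈ F → (y, x) ∈ F)
    (hFtrans : ∀ x y z : X, (x, y) ∈ F → (y, z) ∈ F → (x, z) ∈ F)
    (hFsub : ∀ p ∈ F, ∃ g : G, g • p.1 = p.2)
    (hcount : ∀ x : X, ∃ S : Set X, S.Countable ∧
      ∀ y : X, (∃ g : G, g • x = y) → ∃ z ∈ S, (y, z) ∈ F) :
    MeasurableSet {p : X × X | ∃ g : G, g • p.1 = p.2} := by
  classical
  haveI : BaireSpace (G × G) := by
    letI := upgradeIsCompletelyMetrizable (G × G)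
    exact BaireSpace.of_completelyPseudoMetrizable
  haveI : BaireSpace G := by
    letI := upgradeIsCompletelyMetrizable G
    exact BaireSpace.of_completelyPseudoMetrizable
  set m : (G × G) → (X × X) → (X × X) := fun z p => (z.1 • p.1, z.2 • p.2) with hm_def
  have hc : ∀ p : X × X, Continuous fun z : G × G => m z p := fun p =>
    (continuous_fst.smul continuous_const).prodMk (continuous_snd.smul continuous_const)
  have hmeas : ∀ z : G × G, Measurable (m z) := fun z =>
    ((continuous_const.smul continuous_fst).prodMk
      (continuous_const.smul continuous_snd)).measurable
  have hEq : {p : X × X | ∃ g : G, g • p.1 = p.2} =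
      {p : X × X | ¬ IsMeagre {z : G × G | m z p ∈ F}} := by
    ext ⟨x, y⟩
    simp only [mem_setOf_eq]
    constructor
    · rintro ⟨g, hg⟩
      obtain ⟨S, hSc, hS⟩ := hcount x
      have hcover : (univ : Set G) ⊆ ⋃ w ∈ S, {a : G | (a • x, w) ∈ F} := by
        intro a _
        obtain ⟨w, hwS, hwF⟩ := hS (a • x) ⟨a, rfl⟩
        exact mem_biUnion hwS hwF
      have hex : ∃ w ∈ S, ¬ IsMeagre {a : G | (a • x, w) ∈ F} := by
        by_contra hall
        push_neg at hall
        exact not_isMeagre_of_isOpen isOpen_univ ⟨1, trivial⟩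
          ((myIsMeagre_biUnion hSc hall).mono hcover)
      obtain ⟨w, hwS, hwn⟩ := hex
      set A : Set G := {a : G | (a • x, w) ∈ F} with hA
      set B : Set G := {b : G | (b • y, w) ∈ F} with hB
      have hBA : B = (fun b : G => b * g) ⁻¹' A := by
        ext bb
        simp only [hA, hB, mem_preimage, mem_setOf_eq, mul_smul, hg]
      have hAbm : BaireMeasurableSet A := by
        borelize G
        exact (((continuous_id.smul (continuous_const : Continuous fun _ : G => x)).prodMk
          continuous_const).measurable hFBorel).baireMeasurableSet
      have hBbm : BaireMeasurableSet B := by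
        rw [hBA]
        exact hAbm.preimage (continuous_mul_right g) (Homeomorph.mulRight g).isOpenMap
      have hBn : ¬ IsMeagre B := by
        intro hmB
        apply hwn
        have hAB : A = (fun a : G => a * g⁻¹) ⁻¹' B := by
          ext a
          simp only [mem_preimage, hBA, inv_mul_cancel_right]
        rw [hAB]
        exact hmB.preimage_of_isOpenMap (continuous_mul_right g⁻¹)
          (Homeomorph.mulRight g⁻¹).isOpenMap
      have hsub : A ×ˢ B ⊆ {z : G × G | m z (x, y) ∈ F} := by
        rintro ⟨a, bb⟩ ⟨ha, hb⟩
        exact hFtrans _ _ _ ha (hFsymm _ _ hb)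
      intro hM
      exact not_isMeagre_prod hAbm hBbm hwn hBn (hM.mono hsub)
    · intro hnm
      rcases ({z : G × G | m z (x, y) ∈ F}).eq_empty_or_nonempty with he | ⟨⟨a, bb⟩, hz⟩
      · exact absurd (he ▸ IsMeagre.empty) hnm
      · obtain ⟨h, hh⟩ := hFsub _ hz
        simp only [hm_def] at hh
        refine ⟨bb⁻¹ * h * a, ?_⟩
        rw [mul_smul, mul_smul, hh, inv_smul_smul]
  rw [hEq]
  exact measurableSet_nonmeagerSection m hc hmeas hFBorel
end

section
/- Let G be a Polish group acting continuously on a Polish space X, let F ⊆ E^X_G be a Borel equivalence relation, and let (V_n) be a neighbourhood basis at 1_G of symmetric open sets with V_{n+1}·V_{n+1} ⊆ V_n. Define C = {x ∈ X : ∃n ∀* g ∈ V_n, (x, g·x) ∈ F}. Then for every x ∈ C, witnessed by n, and every g ∈ V_{n+1} with g·x ∈ C, we have (x, g·x) ∈ F. -/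
/-- Relative openness step in the proof of Proposition 2: with
`C = {x | ∃ n, ∀* g ∈ Vₙ, (x, g·x) ∈ F}`, if `x ∈ C` witnessed by `n` and
`g ∈ V_{n+1}` with `g·x ∈ C`, then `(x, g·x) ∈ F`. -/
theorem stmt15 {G X : Type*} [Group G] [TopologicalSpace G] [IsTopologicalGroup G]
    [PolishSpace G] [TopologicalSpace X] [PolishSpace X] [MulAction G X]
    [ContinuousSMul G X] [MeasurableSpace X] [BorelSpace X]
    (V : ℕ → Set G) (hVopen : ∀ n, IsOpen (V n)) (hV1 : ∀ n, (1 : G) ∈ V n)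
    (hVsym : ∀ n, (V n)⁻¹ = V n)
    (hVbasis : ∀ W ∈ nhds (1 : G), ∃ n, V n ⊆ W)
    (hVsq : ∀ n, ∀ g ∈ V (n + 1), ∀ h ∈ V (n + 1), g * h ∈ V n)
    (F : Set (X × X)) (hFBorel : MeasurableSet F)
    (hFrefl : ∀ x : X, (x, x) ∈ F)
    (hFsymm : ∀ x y : X, (x, y) ∈ F → (y, x) ∈ F)
    (hFtrans : ∀ x y z : X, (x, y) ∈ F → (y, z) ∈ F → (x, z) ∈ F)
    (hFsub : ∀ p ∈ F, ∃ g : G, g • p.1 = p.2) :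
    ∀ (x : X) (n : ℕ), IsMeagre (V n \ {g : G | (x, g • x) ∈ F}) →
      ∀ g ∈ V (n + 1),
        g • x ∈ {z : X | ∃ m, IsMeagre (V m \ {h : G | (z, h • z) ∈ F})} →
        (x, g • x) ∈ F := by
  intro x n hmeag g hg hgx
  obtain ⟨m, hm⟩ := hgx
  letI := TopologicalSpace.upgradeIsCompletelyMetrizable G
  -- S1 : translate of the comeager set by g
  set S1 : Set G := {h : G | (x, (h * g) • x) ∈ F} with hS1
  set S2 : Set G := {h : G | (g • x, h • g • x) ∈ F} with hS2
  have hmeag1 : IsMeagre (V (n + 1) \ S1) := by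
    have hpre : IsMeagre ((fun h : G => h * g) ⁻¹' (V n \ {h : G | (x, h • x) ∈ F})) :=
      hmeag.preimage_of_isOpenMap (continuous_mul_right g) (Homeomorph.mulRight g).isOpenMap
    refine hpre.mono ?_
    intro h hh
    exact ⟨hVsq n h hh.1 g hg, hh.2⟩
  have hunion : IsMeagre ((V (n + 1) \ S1) ∪ (V m \ S2)) := by
    rw [IsMeagre, Set.compl_union]
    exact Filter.inter_mem hmeag1 hm
  have hdense : Dense ((V (n + 1) \ S1) ∪ (V m \ S2))ᶜ :=
    dense_of_mem_residual hunion
  have hUopen : IsOpen (V (n + 1) ∩ V m) := (hVopen _).inter (hVopen _)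
  have hUne : (V (n + 1) ∩ V m).Nonempty := ⟨1, hV1 _, hV1 _⟩
  obtain ⟨h, ⟨hh1, hh2⟩, hhc⟩ := hdense.inter_open_nonempty _ hUopen hUne
  rw [Set.mem_compl_iff, Set.mem_union, not_or] at hhc
  have hS1' : h ∈ S1 := by
    by_contra hc
    exact hhc.1 ⟨hh1, hc⟩
  have hS2' : h ∈ S2 := by
    by_contra hc
    exact hhc.2 ⟨hh2, hc⟩
  have h1 : (x, h • g • x) ∈ F := by
    have := hS1'
    rwa [hS1, Set.mem_setOf_eq, mul_smul] at this
  exact hFtrans x (h • g • x) (g • x) h1 (hFsymm _ _ hS2')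
end

section
/- Let G be a Polish group acting continuously on a Polish space X such that the orbit equivalence relation E^X_G is essentially countable. Then E^X_G is σ-lacunary: there exist sequences of Borel sets (B_n) in X and open neighbourhoods (V_n) of 1_G such that ⋃_n B_n is a Borel countable complete section of E^X_G and each B_n is V_n-lacunary (g·x = y with g ∈ V_n and x, y ∈ B_n implies x = y). -/
open Set Topology Filter
open scoped Pointwise

namespace S16

variable {G : Type*} [TopologicalSpace G]

/-- `s` is comeager in `u`. -/
def CmgIn (u s : Set G) : Prop := IsMeagre (u \ s)

lemma isMeagre_union {s t : Set G} (hs : IsMeagre s) (ht : IsMeagre t) :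
    IsMeagre (s ∪ t) := by
  rw [IsMeagre, compl_union]; exact Filter.inter_mem hs ht

lemma CmgIn.mono_left {u v s : Set G} (h : CmgIn u s) (hv : v ⊆ u) : CmgIn v s :=
  h.mono (diff_subset_diff_left hv)

lemma CmgIn.mono_right {u s t : Set G} (h : CmgIn u s) (hst : s ⊆ t) : CmgIn u t :=
  h.mono (diff_subset_diff_right hst)

lemma isMeagre_iUnion' {ι : Sort*} [Countable ι] {s : ι → Set G}
    (hs : ∀ i, IsMeagre (s i)) : IsMeagre (⋃ i, s i) := by
  rw [IsMeagre, compl_iUnion]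
  exact countable_iInter_mem.mpr hs

lemma cmgIn_iInter_iff {ι : Sort*} [Countable ι] {u : Set G} {s : ι → Set G} :
    CmgIn u (⋂ i, s i) ↔ ∀ i, CmgIn u (s i) := by
  constructor
  · exact fun h i => h.mono_right (iInter_subset _ i)
  · intro h
    have h2 : IsMeagre (⋃ i, u \ s i) := isMeagre_iUnion' h
    refine h2.mono ?_
    rw [diff_iInter]

lemma not_isMeagre_of_isOpen [BaireSpace G] {u : Set G} (hu : IsOpen u)
    (hne : u.Nonempty) : ¬ IsMeagre u := by
  intro h
  have hd : Dense uᶜ := dense_of_mem_residual h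
  obtain ⟨x, hx1, hx2⟩ := hd.exists_mem_open hu hne
  exact hx1 hx2

lemma CmgIn.not_isMeagre [BaireSpace G] {u s : Set G} (h : CmgIn u s) (hu : IsOpen u)
    (hne : u.Nonempty) : ¬ IsMeagre s := by
  intro hs
  refine not_isMeagre_of_isOpen hu hne ((isMeagre_union h hs).mono (fun x hx => ?_))
  by_cases hxs : x ∈ s
  · exact Or.inr hxs
  · exact Or.inl ⟨hx, hxs⟩

lemma CmgIn.inter_nonempty [BaireSpace G] {u s t : Set G} (h1 : CmgIn u s) (h2 : CmgIn u t)
    (hu : IsOpen u) (hne : u.Nonempty) : (u ∩ (s ∩ t)).Nonempty := by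
  by_contra hc
  rw [not_nonempty_iff_eq_empty] at hc
  refine not_isMeagre_of_isOpen hu hne ((isMeagre_union h1 h2).mono (fun x hx => ?_))
  by_cases hxs : x ∈ s
  · by_cases hxt : x ∈ t
    · exact absurd (by rw [← hc]; exact ⟨hx, hxs, hxt⟩ : x ∈ (∅ : Set G)) (notMem_empty x)
    · exact Or.inr ⟨hx, hxt⟩
  · exact Or.inl ⟨hx, hxs⟩

section Basis

variable (U : ℕ → Set G)

/-- localization: a nonmeager Baire-measurable set is comeager in some basic open set. -/
lemma exists_cmgIn_of_not_isMeagre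
    (hUb : ∀ v : Set G, IsOpen v → ∀ g ∈ v, ∃ m, g ∈ U m ∧ U m ⊆ v)
    {s : Set G} (hBM : BaireMeasurableSet s) (hne : ¬ IsMeagre s) :
    ∃ m, (U m).Nonempty ∧ CmgIn (U m) s := by
  obtain ⟨u, uo, hsu⟩ := hBM.residualEq_isOpen
  have hE : {x | (x ∈ s) = (x ∈ u)} ∈ residual G := hsu
  have hM : IsMeagre {x | (x ∈ s) = (x ∈ u)}ᶜ := by
    rw [IsMeagre, compl_compl]; exact hE
  have hsub1 : s \ u ⊆ {x | (x ∈ s) = (x ∈ u)}ᶜ := by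
    intro x hx hmem
    simp only [mem_setOf_eq] at hmem
    exact hx.2 (by rw [← hmem]; exact hx.1)
  have hsub2 : u \ s ⊆ {x | (x ∈ s) = (x ∈ u)}ᶜ := by
    intro x hx hmem
    simp only [mem_setOf_eq] at hmem
    exact hx.2 (by rw [hmem]; exact hx.1)
  have hune : u.Nonempty := by
    rcases eq_empty_or_nonempty u with h | h
    · exfalso
      apply hne
      refine hM.mono (fun x hx => hsub1 ⟨hx, ?_⟩)
      rw [h]; exact notMem_empty x
    · exact h
  obtain ⟨g, hg⟩ := hune
  obtain ⟨m, hgm, hmu⟩ := hUb u uo g hg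
  exact ⟨m, ⟨g, hgm⟩, hM.mono (fun x hx => hsub2 ⟨hmu hx.1, hx.2⟩)⟩

variable [BaireSpace G]

lemma cmgIn_compl_iff
    (hUo : ∀ m, IsOpen (U m))
    (hUb : ∀ v : Set G, IsOpen v → ∀ g ∈ v, ∃ m, g ∈ U m ∧ U m ⊆ v)
    {s Q : Set G} (hBM : BaireMeasurableSet s) (hQ : IsOpen Q) :
    CmgIn Q sᶜ ↔ ∀ m, U m ⊆ Q → (U m).Nonempty → ¬ CmgIn (U m) s := by
  have hdc : Q \ sᶜ = Q ∩ s := by ext x; simp [mem_diff]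
  constructor
  · intro h m hmQ hmne hcm
    rw [CmgIn, hdc] at h
    refine not_isMeagre_of_isOpen (hUo m) hmne ((isMeagre_union h hcm).mono (fun x hx => ?_))
    by_cases hxs : x ∈ s
    · exact Or.inl ⟨hmQ hx, hxs⟩
    · exact Or.inr ⟨hx, hxs⟩
  · intro h
    rw [CmgIn, hdc]
    by_contra hne
    obtain ⟨m0, hm0ne, hm0⟩ := exists_cmgIn_of_not_isMeagre U hUb
      ((hQ.baireMeasurableSet).inter hBM) hne
    -- U m0 ∩ Q is nonempty and open
    have hQm : CmgIn (U m0) Q := hm0.mono_right inter_subset_left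
    have hne2 : (U m0 ∩ Q).Nonempty := by
      by_contra hc
      rw [not_nonempty_iff_eq_empty] at hc
      refine not_isMeagre_of_isOpen (hUo m0) hm0ne (hQm.mono (s := U m0 \ Q) (fun x hx => ⟨hx, fun hxQ => ?_⟩))
      exact absurd (by rw [← hc]; exact ⟨hx, hxQ⟩ : x ∈ (∅ : Set G)) (notMem_empty x)
    obtain ⟨g, hg⟩ := hne2
    obtain ⟨m1, hgm1, hm1sub⟩ := hUb _ ((hUo m0).inter hQ) g hg
    refine h m1 (hm1sub.trans inter_subset_right) ⟨g, hgm1⟩ ?_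
    refine hm0.mono (fun x hx => ?_)
    exact ⟨(hm1sub hx.1).1, fun hmem => hx.2 hmem.2⟩

end Basis

lemma measurableSet_setOf_const {Z : Type*} [MeasurableSpace Z] (P : Prop) :
    MeasurableSet {_z : Z | P} := by
  by_cases h : P
  · have : {_z : Z | P} = univ := by ext z; simp [h]
    rw [this]; exact MeasurableSet.univ
  · have : {_z : Z | P} = ∅ := by ext z; simp [h]
    rw [this]; exact MeasurableSet.empty

section Montgomery

variable {Z : Type*} [MeasurableSpace Z]
variable [MeasurableSpace G] [BorelSpace G] [BaireSpace G]
variable (U : ℕ → Set G)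

theorem measurableSet_cmgIn_aux
    (hUo : ∀ m, IsOpen (U m))
    (hUb : ∀ v : Set G, IsOpen v → ∀ g ∈ v, ∃ m, g ∈ U m ∧ U m ⊆ v)
    {A : Set (Z × G)} (hA : MeasurableSet A) :
    (∀ m, MeasurableSet {z : Z | CmgIn (U m) {g : G | (z, g) ∈ A}}) ∧
      (∀ m, MeasurableSet {z : Z | CmgIn (U m) {g : G | (z, g) ∈ A}ᶜ}) := by
  have hBMsec : ∀ (B : Set (Z × G)), MeasurableSet B → ∀ z : Z,
      BaireMeasurableSet {g : G | (z, g) ∈ B} := by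
    intro B hB z
    have : MeasurableSet {g : G | (z, g) ∈ B} := measurable_prodMk_left hB
    exact this.baireMeasurableSet
  revert hA
  have main : ∀ ⦃A : Set (Z × G)⦄, MeasurableSet A →
      ((∀ m, MeasurableSet {z : Z | CmgIn (U m) {g : G | (z, g) ∈ A}}) ∧
        (∀ m, MeasurableSet {z : Z | CmgIn (U m) {g : G | (z, g) ∈ A}ᶜ})) := by
    refine MeasurableSpace.induction_on_inter (C := fun A _ =>
        (∀ m, MeasurableSet {z : Z | CmgIn (U m) {g : G | (z, g) ∈ A}}) ∧
        (∀ m, MeasurableSet {z : Z | CmgIn (U m) {g : G | (z, g) ∈ A}ᶜ}))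
      generateFrom_prod.symm isPiSystem_prod ?_ ?_ ?_ ?_
    · -- empty set
      have hemp : ∀ z : Z, {g : G | (z, g) ∈ (∅ : Set (Z × G))} = (∅ : Set G) := by
        intro z; ext g; simp
      constructor
      · intro m
        simp only [hemp]
        exact measurableSet_setOf_const _
      · intro m
        simp only [hemp]
        exact measurableSet_setOf_const _
    · -- rectangles
      rintro t ⟨s, hs, t', ht', rfl⟩
      simp only [mem_setOf_eq] at hs ht'
      have hsec1 : ∀ z : Z, z ∈ s → {g : G | (z, g) ∈ s ×ˢ t'} = t' := by
        intro z hz; ext g; simp [Set.mem_prod, hz]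
      have hsec2 : ∀ z : Z, z ∉ s → {g : G | (z, g) ∈ s ×ˢ t'} = (∅ : Set G) := by
        intro z hz; ext g; simp [Set.mem_prod, hz]
      constructor
      · intro m
        have heq : {z : Z | CmgIn (U m) {g : G | (z, g) ∈ s ×ˢ t'}} =
            (s ∩ {_z : Z | CmgIn (U m) t'}) ∪ (sᶜ ∩ {_z : Z | CmgIn (U m) (∅ : Set G)}) := by
          ext z
          by_cases h : z ∈ s
          · simp only [mem_setOf_eq, hsec1 z h, mem_union, mem_inter_iff, mem_compl_iff]
            tauto
          · simp only [mem_setOf_eq, hsec2 z h, mem_union, mem_inter_iff, mem_compl_iff]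
            tauto
        rw [heq]
        exact (hs.inter (measurableSet_setOf_const _)).union
          (hs.compl.inter (measurableSet_setOf_const _))
      · intro m
        have heq : {z : Z | CmgIn (U m) {g : G | (z, g) ∈ s ×ˢ t'}ᶜ} =
            (s ∩ {_z : Z | CmgIn (U m) t'ᶜ}) ∪ (sᶜ ∩ {_z : Z | CmgIn (U m) ((∅ : Set G))ᶜ}) := by
          ext z
          by_cases h : z ∈ s
          · simp only [mem_setOf_eq, hsec1 z h, mem_union, mem_inter_iff, mem_compl_iff]
            tauto
          · simp only [mem_setOf_eq, hsec2 z h, mem_union, mem_inter_iff, mem_compl_iff]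
            tauto
        rw [heq]
        exact (hs.inter (measurableSet_setOf_const _)).union
          (hs.compl.inter (measurableSet_setOf_const _))
    · -- complements
      rintro t ht ⟨h1, h2⟩
      constructor
      · intro m
        have : ∀ z : Z, {g : G | (z, g) ∈ tᶜ} = {g : G | (z, g) ∈ t}ᶜ := fun z => rfl
        simp only [this]
        exact h2 m
      · intro m
        have : ∀ z : Z, {g : G | (z, g) ∈ tᶜ}ᶜ = {g : G | (z, g) ∈ t} := by
          intro z; ext g; simp
        simp only [this]
        exact h1 m
    · -- countable unions
      intro f _ hfm hf
      have hsecU : ∀ z : Z, {g : G | (z, g) ∈ ⋃ i, f i} = ⋃ i, {g : G | (z, g) ∈ f i} := by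
        intro z; ext g; simp
      constructor
      · intro m
        have key : ∀ z : Z, CmgIn (U m) {g : G | (z, g) ∈ ⋃ i, f i} ↔
            ∀ m', U m' ⊆ U m → (U m').Nonempty →
              ∃ i, ¬ CmgIn (U m') ({g : G | (z, g) ∈ f i}ᶜ) := by
          intro z
          rw [hsecU z]
          have hrw : (⋃ i, {g : G | (z, g) ∈ f i}) = (⋂ i, {g : G | (z, g) ∈ f i}ᶜ)ᶜ := by
            simp [compl_iInter]
          rw [hrw,
            cmgIn_compl_iff U hUo hUb
              (BaireMeasurableSet.iInter (fun i => (hBMsec (f i) (hfm i) z).compl)) (hUo m)]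
          constructor
          · intro h m' h1 h2
            have h3 := h m' h1 h2
            rw [cmgIn_iInter_iff] at h3
            push_neg at h3
            exact h3
          · intro h m' h1 h2
            rw [cmgIn_iInter_iff]
            push_neg
            exact h m' h1 h2
        have hset : {z : Z | CmgIn (U m) {g : G | (z, g) ∈ ⋃ i, f i}} =
            ⋂ m', {z : Z | U m' ⊆ U m → (U m').Nonempty →
              ∃ i, ¬ CmgIn (U m') ({g : G | (z, g) ∈ f i}ᶜ)} := by
          ext z
          simp only [mem_setOf_eq, mem_iInter]
          exact key z
        rw [hset]
        refine MeasurableSet.iInter (fun m' => ?_)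
        by_cases hc : U m' ⊆ U m ∧ (U m').Nonempty
        · have heq : {z : Z | U m' ⊆ U m → (U m').Nonempty →
              ∃ i, ¬ CmgIn (U m') ({g : G | (z, g) ∈ f i}ᶜ)} =
              ⋃ i, ({z : Z | CmgIn (U m') ({g : G | (z, g) ∈ f i}ᶜ)})ᶜ := by
            ext z; simp only [mem_setOf_eq, mem_iUnion, mem_compl_iff]
            constructor
            · intro h; exact h hc.1 hc.2
            · intro h _ _; exact h
          rw [heq]
          exact MeasurableSet.iUnion (fun i => ((hf i).2 m').compl)
        · have heq : {z : Z | U m' ⊆ U m → (U m').Nonempty →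
              ∃ i, ¬ CmgIn (U m') ({g : G | (z, g) ∈ f i}ᶜ)} = univ := by
            ext z; simp only [mem_setOf_eq, mem_univ, iff_true]
            intro h1 h2; exact absurd ⟨h1, h2⟩ hc
          rw [heq]; exact MeasurableSet.univ
      · intro m
        have heq : {z : Z | CmgIn (U m) {g : G | (z, g) ∈ ⋃ i, f i}ᶜ} =
            ⋂ i, {z : Z | CmgIn (U m) ({g : G | (z, g) ∈ f i}ᶜ)} := by
          ext z
          simp only [mem_setOf_eq, mem_iInter]
          rw [hsecU z, compl_iUnion, cmgIn_iInter_iff]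
        rw [heq]
        exact MeasurableSet.iInter (fun i => (hf i).2 m)
  exact fun hA => main hA

theorem measurableSet_cmgIn
    (hUo : ∀ m, IsOpen (U m))
    (hUb : ∀ v : Set G, IsOpen v → ∀ g ∈ v, ∃ m, g ∈ U m ∧ U m ⊆ v)
    {A : Set (Z × G)} (hA : MeasurableSet A) (m : ℕ) :
    MeasurableSet {z : Z | CmgIn (U m) {g : G | (z, g) ∈ A}} :=
  (measurableSet_cmgIn_aux U hUo hUb hA).1 m

theorem measurableSet_not_isMeagre
    (hUo : ∀ m, IsOpen (U m))
    (hUb : ∀ v : Set G, IsOpen v → ∀ g ∈ v, ∃ m, g ∈ U m ∧ U m ⊆ v)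
    {A : Set (Z × G)} (hA : MeasurableSet A) :
    MeasurableSet {z : Z | ¬ IsMeagre {g : G | (z, g) ∈ A}} := by
  have heq : {z : Z | ¬ IsMeagre {g : G | (z, g) ∈ A}} =
      ⋃ m, {z : Z | (U m).Nonempty ∧ CmgIn (U m) {g : G | (z, g) ∈ A}} := by
    ext z
    simp only [mem_setOf_eq, mem_iUnion]
    constructor
    · intro h
      obtain ⟨m, h1, h2⟩ := exists_cmgIn_of_not_isMeagre U hUb
        (((measurable_prodMk_left hA : MeasurableSet _)).baireMeasurableSet) h
      exact ⟨m, h1, h2⟩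
    · rintro ⟨m, h1, h2⟩
      exact h2.not_isMeagre (hUo m) h1
  rw [heq]
  refine MeasurableSet.iUnion (fun m => ?_)
  by_cases h : (U m).Nonempty
  · have heq2 : {z : Z | (U m).Nonempty ∧ CmgIn (U m) {g : G | (z, g) ∈ A}} =
        {z : Z | CmgIn (U m) {g : G | (z, g) ∈ A}} := by
      ext z; simp [h]
    rw [heq2]; exact measurableSet_cmgIn U hUo hUb hA m
  · have heq2 : {z : Z | (U m).Nonempty ∧ CmgIn (U m) {g : G | (z, g) ∈ A}} = ∅ := by
      ext z; simp [h]
    rw [heq2]; exact MeasurableSet.empty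

end Montgomery

section Translation

variable [Group G] [IsTopologicalGroup G]

lemma isMeagre_preimage_mulRight (h : G) {s : Set G} :
    IsMeagre ((fun g => g * h) ⁻¹' s) ↔ IsMeagre s := by
  show ((fun g => g * h) ⁻¹' s)ᶜ ∈ residual G ↔ sᶜ ∈ residual G
  conv_rhs => rw [← (Homeomorph.mulRight h).residual_map_eq]
  rw [Filter.mem_map, ← preimage_compl, Homeomorph.coe_mulRight]

end Translation

section Core

variable {X Y : Type*}

/-- the set of group elements fixing the `ψ`-value of `x`. -/
def hsetS (G : Type*) [Group G] [MulAction G X] (ψ : X → Y) (x : X) : Set G :=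
  {g : G | ψ (g • x) = ψ x}

/-- the "D-set": points whose `hsetS` is comeager in `u`. -/
def Dset (G : Type*) [TopologicalSpace G] [Group G] [MulAction G X]
    (ψ : X → Y) (u : Set G) : Set X :=
  {x : X | CmgIn u (hsetS G ψ x)}

/-- group elements sending `x` into `A ∩ D` without changing the `ψ`-value. -/
def sset (G : Type*) [Group G] [MulAction G X] (ψ : X → Y) (D A : Set X) (x : X) : Set G :=
  {g : G | g • x ∈ A ∩ D ∧ ψ (g • x) = ψ x}

/-- largeness of `A` relative to the fiber through `x` (restricted to `D`). -/
def Large (G : Type*) [TopologicalSpace G] [Group G] [MulAction G X]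
    (ψ : X → Y) (D A : Set X) (x : X) : Prop :=
  ¬ IsMeagre (sset G ψ D A x)

variable [Group G] [MulAction G X]

omit [TopologicalSpace G] in
lemma sset_mono {ψ : X → Y} {D A A' : Set X} (h : A ⊆ A') (x : X) :
    sset G ψ D A x ⊆ sset G ψ D A' x :=
  fun _g hg => ⟨⟨h hg.1.1, hg.1.2⟩, hg.2⟩

lemma Large.mono {ψ : X → Y} {D A A' : Set X} (h : A ⊆ A')
    {x : X} (hL : Large G ψ D A x) : Large G ψ D A' x :=
  fun hm => hL (hm.mono (sset_mono h x))

lemma Large.nonempty {ψ : X → Y} {D A : Set X} {x : X}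
    (hL : Large G ψ D A x) : (sset G ψ D A x).Nonempty := by
  rcases eq_empty_or_nonempty (sset G ψ D A x) with h | h
  · exact absurd (show IsMeagre (sset G ψ D A x) by rw [h]; exact IsMeagre.empty) hL
  · exact h

omit [TopologicalSpace G] in
lemma sset_smul {ψ : X → Y} {D A : Set X} {x : X} {h : G} (hψ : ψ (h • x) = ψ x) :
    sset G ψ D A (h • x) = (fun g => g * h) ⁻¹' (sset G ψ D A x) := by
  ext g
  simp only [sset, mem_setOf_eq, mem_preimage, smul_smul, hψ]

omit [TopologicalSpace G] in
lemma hsetS_smul {ψ : X → Y} {x : X} {h : G} (hψ : ψ (h • x) = ψ x) :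
    hsetS G ψ (h • x) = (fun g => g * h) ⁻¹' (hsetS G ψ x) := by
  ext g
  simp only [hsetS, mem_setOf_eq, mem_preimage, smul_smul, hψ]

variable [IsTopologicalGroup G]

lemma large_smul {ψ : X → Y} {D A : Set X} {x : X} {h : G} (hψ : ψ (h • x) = ψ x) :
    Large G ψ D A (h • x) ↔ Large G ψ D A x := by
  unfold Large
  rw [sset_smul hψ, isMeagre_preimage_mulRight]

lemma large_congr {ψ : X → Y} {D A : Set X} {x x' : X} (hψ : ψ x' = ψ x)
    (hx : ∃ h : G, h • x = x') : Large G ψ D A x' ↔ Large G ψ D A x := by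
  obtain ⟨h, rfl⟩ := hx
  exact large_smul hψ

end Core

section Recursion

variable {X Y : Type*}

/-- finite intersections of basic sets along a list. -/
def AS (W : ℕ → Set X) : List ℕ → Set X
  | [] => univ
  | j :: s => W j ∩ AS W s

/-- geometric suitability of `W j` at stage `s`. -/
def geomOK [MetricSpace X] (W : ℕ → Set X) (s : List ℕ) (j : ℕ) : Prop :=
  Bornology.IsBounded (W j) ∧ Metric.diam (W j) ≤ (1/2 : ℝ) ^ s.length ∧
    closure (W j) ⊆ AS W s

/-- candidates for the next index in the recursion. -/
def GoodSet (G : Type*) [TopologicalSpace G] [Group G] [MulAction G X] [MetricSpace X]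
    (ψ : X → Y) (D : Set X) (W : ℕ → Set X) (s : List ℕ) (j : ℕ) : Set X :=
  {x : X | geomOK W s j ∧ Large G ψ D (AS W (j :: s)) x}

/-- points whose largeness-recursion follows the list `s` (read right to left). -/
def XS (G : Type*) [TopologicalSpace G] [Group G] [MulAction G X] [MetricSpace X]
    (ψ : X → Y) (D : Set X) (W : ℕ → Set X) : List ℕ → Set X
  | [] => {x : X | Large G ψ D univ x}
  | j :: s => (XS G ψ D W s ∩ GoodSet G ψ D W s j) ∩
      ⋂ (j' : ℕ) (_ : j' < j), (GoodSet G ψ D W s j')ᶜ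

/-- the selector set. -/
def Tset (G : Type*) [TopologicalSpace G] [Group G] [MulAction G X] [MetricSpace X]
    (ψ : X → Y) (D : Set X) (W : ℕ → Set X) : Set X :=
  (D ∩ {x : X | Large G ψ D univ x}) ∩
    ⋂ k : ℕ, ⋃ (s : List ℕ) (_ : s.length = k), (XS G ψ D W s ∩ AS W s)

variable [Group G] [MulAction G X] [IsTopologicalGroup G] [MetricSpace X]

lemma as_open {W : ℕ → Set X} (hW : ∀ j, IsOpen (W j)) : ∀ s, IsOpen (AS W s)
  | [] => isOpen_univ
  | j :: s => (hW j).inter (as_open hW s)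

lemma as_cons_subset {W : ℕ → Set X} (j : ℕ) (s : List ℕ) : AS W (j :: s) ⊆ AS W s :=
  inter_subset_right

lemma as_cons_subset_head {W : ℕ → Set X} (j : ℕ) (s : List ℕ) : AS W (j :: s) ⊆ W j :=
  inter_subset_left

lemma xs_large {ψ : X → Y} {D : Set X} {W : ℕ → Set X} {x : X} :
    ∀ {s : List ℕ}, x ∈ XS G ψ D W s → Large G ψ D (AS W s) x := by
  intro s hx
  cases s with
  | nil => exact hx
  | cons j t => exact hx.1.2.2

lemma xs_congr {ψ : X → Y} {D : Set X} {W : ℕ → Set X} {x x' : X} (hψ : ψ x' = ψ x)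
    (hx : ∃ h : G, h • x = x') :
    ∀ s : List ℕ, (x' ∈ XS G ψ D W s ↔ x ∈ XS G ψ D W s) := by
  intro s
  induction s with
  | nil =>
    show Large G ψ D univ x' ↔ Large G ψ D univ x
    exact large_congr hψ hx
  | cons j t ih =>
    show x' ∈ (XS G ψ D W t ∩ GoodSet G ψ D W t j) ∩ _ ↔
      x ∈ (XS G ψ D W t ∩ GoodSet G ψ D W t j) ∩ _
    simp only [mem_inter_iff, mem_iInter, mem_compl_iff, GoodSet, mem_setOf_eq]
    rw [ih]
    constructor
    · rintro ⟨⟨h1, h2, h3⟩, h4⟩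
      refine ⟨⟨h1, h2, (large_congr (G := G) hψ hx).mp h3⟩, fun j' hj' hmem => ?_⟩
      exact h4 j' hj' ⟨hmem.1, (large_congr (G := G) hψ hx).mpr hmem.2⟩
    · rintro ⟨⟨h1, h2, h3⟩, h4⟩
      refine ⟨⟨h1, h2, (large_congr (G := G) hψ hx).mpr h3⟩, fun j' hj' hmem => ?_⟩
      exact h4 j' hj' ⟨hmem.1, (large_congr (G := G) hψ hx).mp hmem.2⟩

lemma xs_unique {ψ : X → Y} {D : Set X} {W : ℕ → Set X} {x : X} :
    ∀ (s s' : List ℕ), s.length = s'.length →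
      x ∈ XS G ψ D W s → x ∈ XS G ψ D W s' → s = s' := by
  intro s
  induction s with
  | nil =>
    intro s' hlen _ _
    exact (List.length_eq_zero_iff.mp hlen.symm).symm
  | cons j t ih =>
    intro s' hlen hx hx'
    cases s' with
    | nil => exact absurd hlen (by simp)
    | cons j' t' =>
      have ht : t = t' := ih t' (by simpa using hlen) hx.1.1 hx'.1.1
      subst ht
      have hj : j = j' := by
        rcases lt_trichotomy j j' with h | h | h
        · exfalso
          have := (mem_iInter.mp (mem_iInter.mp hx'.2 j)) h
          exact this hx.1.2
        · exact h
        · exfalso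
          have := (mem_iInter.mp (mem_iInter.mp hx.2 j')) h
          exact this hx'.1.2
      rw [hj]

lemma exists_good {ψ : X → Y} {D : Set X} {W : ℕ → Set X} {x : X}
    (hWopen : ∀ j, IsOpen (W j))
    (hWcov : ∀ (A : Set X), IsOpen A → ∀ ε : ℝ, 0 < ε → ∀ z ∈ A,
      ∃ j, z ∈ W j ∧ closure (W j) ⊆ A ∧ Bornology.IsBounded (W j) ∧ Metric.diam (W j) ≤ ε)
    {s : List ℕ} (hx : x ∈ XS G ψ D W s) : ∃ j, x ∈ XS G ψ D W (j :: s) := by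
  classical
  have hL : Large G ψ D (AS W s) x := xs_large hx
  have hcover : sset G ψ D (AS W s) x ⊆
      ⋃ j : {j : ℕ // geomOK W s j}, sset G ψ D (AS W (j.1 :: s)) x := by
    intro g hg
    obtain ⟨j, hj1, hj2, hj3, hj4⟩ := hWcov (AS W s) (as_open hWopen s)
      ((1/2 : ℝ) ^ s.length) (by positivity) (g • x) hg.1.1
    refine mem_iUnion.mpr ⟨⟨j, hj3, hj4, hj2⟩, ?_⟩
    exact ⟨⟨⟨hj1, hg.1.1⟩, hg.1.2⟩, hg.2⟩
  have hex : ∃ j, x ∈ GoodSet G ψ D W s j := by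
    by_contra hno
    push_neg at hno
    apply hL
    refine (isMeagre_iUnion' (s := fun j : {j : ℕ // geomOK W s j} =>
      sset G ψ D (AS W (j.1 :: s)) x) ?_).mono hcover
    intro j
    by_contra hmea
    exact hno j.1 ⟨j.2, hmea⟩
  refine ⟨Nat.find hex, ⟨⟨hx, Nat.find_spec hex⟩, ?_⟩⟩
  refine mem_iInter.mpr (fun j' => mem_iInter.mpr (fun hj' => ?_))
  exact Nat.find_min hex hj'

end Recursion

section TsetLemmas

set_option linter.unusedSectionVars false

variable {X Y : Type*} [Group G] [MulAction G X] [IsTopologicalGroup G] [MetricSpace X]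

lemma tset_unique {ψ : X → Y} {D : Set X} {W : ℕ → Set X} {z z' : X}
    (horb : ∀ a b : X, ψ a = ψ b → ∃ h : G, h • a = b)
    (hz : z ∈ Tset G ψ D W) (hz' : z' ∈ Tset G ψ D W) (hψ : ψ z' = ψ z) : z = z' := by
  have key : ∀ n : ℕ, dist z z' ≤ (1/2 : ℝ) ^ n := by
    intro n
    obtain ⟨s, hslen, hsX, hsA⟩ : ∃ s : List ℕ, s.length = n + 1 ∧
        z ∈ XS G ψ D W s ∧ z ∈ AS W s := by
      have := mem_iInter.mp hz.2 (n + 1)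
      obtain ⟨s, hs1, hs2⟩ := mem_iUnion₂.mp this
      exact ⟨s, hs1, hs2.1, hs2.2⟩
    obtain ⟨s', hslen', hsX', hsA'⟩ : ∃ s' : List ℕ, s'.length = n + 1 ∧
        z' ∈ XS G ψ D W s' ∧ z' ∈ AS W s' := by
      have := mem_iInter.mp hz'.2 (n + 1)
      obtain ⟨s, hs1, hs2⟩ := mem_iUnion₂.mp this
      exact ⟨s, hs1, hs2.1, hs2.2⟩
    have hzX' : z ∈ XS G ψ D W s' := by
      obtain ⟨h, hh⟩ := horb z z' hψ.symm
      exact (xs_congr (G := G) hψ ⟨h, hh⟩ s').mp hsX'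
    have hss : s = s' := xs_unique s s' (by rw [hslen, hslen']) hsX hzX'
    subst hss
    cases s with
    | nil => exact absurd hslen (by simp)
    | cons j t =>
      have hgeom : geomOK W t j := hsX.1.2.1
      have htlen : t.length = n := by simpa using hslen
      have h1 : z ∈ W j := as_cons_subset_head j t hsA
      have h2 : z' ∈ W j := as_cons_subset_head j t hsA'
      calc dist z z' ≤ Metric.diam (W j) := Metric.dist_le_diam_of_mem hgeom.1 h1 h2
        _ ≤ (1/2 : ℝ) ^ t.length := hgeom.2.1
        _ = (1/2 : ℝ) ^ n := by rw [htlen]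
  have h0 : dist z z' ≤ 0 := by
    refine ge_of_tendsto (tendsto_pow_atTop_nhds_zero_of_lt_one (by norm_num) (by norm_num))
      (Filter.Eventually.of_forall key)
  exact dist_le_zero.mp h0

lemma tset_exists [CompleteSpace X] {ψ : X → Y} {D : Set X} {W : ℕ → Set X} {x : X}
    (hWopen : ∀ j, IsOpen (W j))
    (hWcov : ∀ (A : Set X), IsOpen A → ∀ ε : ℝ, 0 < ε → ∀ z ∈ A,
      ∃ j, z ∈ W j ∧ closure (W j) ⊆ A ∧ Bornology.IsBounded (W j) ∧ Metric.diam (W j) ≤ ε)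
    (hD : IsClosed D)
    (hfib : IsClosed {x' : X | ψ x' = ψ x})
    (horb : ∀ a b : X, ψ a = ψ b → ∃ h : G, h • a = b)
    (hx : Large G ψ D univ x) :
    ∃ z, z ∈ Tset G ψ D W ∧ ψ z = ψ x := by
  classical
  have base : x ∈ XS G ψ D W [] := hx
  let F : ∀ k : ℕ, {s : List ℕ // s.length = k ∧ x ∈ XS G ψ D W s} := fun k =>
    Nat.rec ⟨[], rfl, base⟩
      (fun k ih =>
        ⟨Classical.choose (exists_good hWopen hWcov ih.2.2) :: ih.1,
          by simp [ih.2.1],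
          Classical.choose_spec (exists_good hWopen hWcov ih.2.2)⟩) k
  have hrep : ∀ k : ℕ, (F (k+1)).1 =
      Classical.choose (exists_good hWopen hWcov (F k).2.2) :: (F k).1 := fun k => rfl
  have hASmono : ∀ k l : ℕ, k ≤ l → AS W (F l).1 ⊆ AS W (F k).1 := by
    intro k l hkl
    induction l, hkl using Nat.le_induction with
    | base => exact subset_rfl
    | succ l hkl ih =>
      refine subset_trans ?_ ih
      rw [hrep l]
      exact as_cons_subset _ _
  have hzk : ∀ k : ℕ, ∃ g : G, (g • x ∈ AS W (F k).1 ∩ D) ∧ ψ (g • x) = ψ x := by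
    intro k
    obtain ⟨g, hg⟩ := (xs_large (F k).2.2).nonempty
    exact ⟨g, hg.1, hg.2⟩
  choose gseq hgmem hgψ using hzk
  set z : ℕ → X := fun k => gseq k • x with hzdef
  have hgeomk : ∀ k : ℕ, geomOK W (F k).1 (Classical.choose (exists_good hWopen hWcov (F k).2.2)) := by
    intro k
    have := (F (k+1)).2.2
    rw [hrep k] at this
    exact this.1.2.1
  have hdist : ∀ (k a b : ℕ), k + 1 ≤ a → k + 1 ≤ b → dist (z a) (z b) ≤ (1/2 : ℝ) ^ k := by
    intro k a b ha hb
    have hza : z a ∈ AS W (F (k+1)).1 := (hASmono (k+1) a ha) (hgmem a).1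
    have hzb : z b ∈ AS W (F (k+1)).1 := (hASmono (k+1) b hb) (hgmem b).1
    rw [hrep k] at hza hzb
    have h1 := as_cons_subset_head _ _ hza
    have h2 := as_cons_subset_head _ _ hzb
    calc dist (z a) (z b) ≤ Metric.diam (W _) := Metric.dist_le_diam_of_mem (hgeomk k).1 h1 h2
      _ ≤ (1/2 : ℝ) ^ (F k).1.length := (hgeomk k).2.1
      _ = (1/2 : ℝ) ^ k := by rw [(F k).2.1]
  have hcauchy : CauchySeq z := by
    rw [Metric.cauchySeq_iff]
    intro ε hε
    obtain ⟨k, hk⟩ := exists_pow_lt_of_lt_one hε (by norm_num : (1/2 : ℝ) < 1)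
    refine ⟨k + 1, fun a ha b hb => ?_⟩
    calc dist (z a) (z b) ≤ (1/2 : ℝ) ^ k := hdist k a b ha hb
      _ < ε := hk
  obtain ⟨zlim, hzlim⟩ := cauchySeq_tendsto_of_complete hcauchy
  have hmemD : zlim ∈ D :=
    hD.mem_of_tendsto hzlim (Filter.Eventually.of_forall (fun k => (hgmem k).2))
  have hψz : ψ zlim = ψ x :=
    hfib.mem_of_tendsto hzlim (Filter.Eventually.of_forall (fun k => hgψ k))
  have hxz : ∃ h : G, h • x = zlim := horb x zlim hψz.symm
  have hAS : ∀ k : ℕ, zlim ∈ AS W (F k).1 := by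
    intro k
    have hcl : zlim ∈ closure (W (Classical.choose (exists_good hWopen hWcov (F k).2.2))) := by
      refine mem_closure_of_tendsto hzlim ?_
      refine Filter.eventually_atTop.mpr ⟨k + 1, fun l hl => ?_⟩
      have hza : z l ∈ AS W (F (k+1)).1 := (hASmono (k+1) l hl) (hgmem l).1
      rw [hrep k] at hza
      exact as_cons_subset_head _ _ hza
    exact (hgeomk k).2.2 hcl
  have hXS : ∀ k : ℕ, zlim ∈ XS G ψ D W (F k).1 := by
    intro k
    exact (xs_congr (G := G) hψz hxz ((F k).1)).mpr (F k).2.2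
  refine ⟨zlim, ⟨⟨hmemD, ?_⟩, ?_⟩, hψz⟩
  · exact (large_congr (G := G) hψz hxz).mpr hx
  · exact mem_iInter.mpr (fun k => mem_iUnion₂.mpr ⟨(F k).1, (F k).2.1, ⟨hXS k, hAS k⟩⟩)

end TsetLemmas

section Fiber

set_option linter.unusedSectionVars false

variable {X Y : Type*} [Group G] [MulAction G X] [IsTopologicalGroup G] [BaireSpace G]

lemma CmgIn.inter_nonempty' {u s : Set G} (h : CmgIn u s) (hu : IsOpen u)
    (hne : u.Nonempty) : (u ∩ s).Nonempty := by
  have := h.inter_nonempty h hu hne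
  obtain ⟨k, hk⟩ := this
  exact ⟨k, hk.1, hk.2.1⟩

lemma dset_samefiber {ψ : X → Y} {u : Set G} (hu : IsOpen u) {x : X} {g : G}
    (hx : x ∈ Dset G ψ u) (hgx : g • x ∈ Dset G ψ u) (hg : g ∈ u⁻¹ * u) :
    ψ (g • x) = ψ x := by
  classical
  set K : Set G := {k : G | ψ (k • x) = ψ (g • x)} with hK
  have h2 : CmgIn u (hsetS G ψ (g • x)) := hgx
  have hpre : hsetS G ψ (g • x) = (fun k => k * g) ⁻¹' K := by
    ext k; simp only [hsetS, hK, mem_setOf_eq, mem_preimage, smul_smul]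
  have h3 : IsMeagre (((fun k : G => k * g⁻¹) ⁻¹' u) \ K) := by
    rw [← isMeagre_preimage_mulRight g]
    have heq : (fun k : G => k * g) ⁻¹' (((fun k : G => k * g⁻¹) ⁻¹' u) \ K) =
        u \ ((fun k : G => k * g) ⁻¹' K) := by
      ext k
      simp only [mem_preimage, mem_diff, mul_inv_cancel_right]
    rw [heq, ← hpre]
    exact h2
  set O : Set G := u ∩ ((fun k : G => k * g⁻¹) ⁻¹' u) with hO
  have hOopen : IsOpen O := hu.inter (hu.preimage (continuous_mul_right g⁻¹))
  have hOne : O.Nonempty := by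
    rw [Set.mem_mul] at hg
    obtain ⟨a, ha, b, hb, hab⟩ := hg
    rw [Set.mem_inv] at ha
    refine ⟨b, hb, ?_⟩
    show b * g⁻¹ ∈ u
    have hba : b * g⁻¹ = a⁻¹ := by
      rw [← hab]
      group
    rw [hba]
    exact ha
  have hc1 : CmgIn O (hsetS G ψ x) := CmgIn.mono_left hx inter_subset_left
  have hc2 : CmgIn O K := CmgIn.mono_left h3 inter_subset_right
  obtain ⟨k, _, hk1, hk2⟩ := hc1.inter_nonempty hc2 hOopen hOne
  exact hk2.symm.trans hk1

lemma exists_good_point (U : ℕ → Set G) (hUo : ∀ m, IsOpen (U m))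
    (hUb : ∀ v : Set G, IsOpen v → ∀ g ∈ v, ∃ m, g ∈ U m ∧ U m ⊆ v)
    {ψ : X → Y} (hBM : ∀ (x : X) (y : Y), BaireMeasurableSet {g : G | ψ (g • x) = y})
    (hcnt : ∀ x : X, (ψ '' {x' | ∃ g : G, g • x = x'}).Countable)
    (x : X) :
    ∃ (m : ℕ) (z : X), (∃ h : G, h • x = z) ∧ 1 ∈ U m ∧
      z ∈ Dset G ψ (U m) ∧ Large G ψ (Dset G ψ (U m)) univ z := by
  classical
  set C : Set Y := ψ '' {x' | ∃ g : G, g • x = x'} with hC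
  have hcount : C.Countable := hcnt x
  haveI := hcount.to_subtype
  have hcover : (univ : Set G) = ⋃ y : C, {g : G | ψ (g • x) = (y : Y)} := by
    ext g
    simp only [mem_univ, true_iff, mem_iUnion, mem_setOf_eq]
    exact ⟨⟨ψ (g • x), ⟨g • x, ⟨g, rfl⟩, rfl⟩⟩, rfl⟩
  have hexy : ∃ y : C, ¬ IsMeagre {g : G | ψ (g • x) = (y : Y)} := by
    by_contra hno
    push_neg at hno
    refine not_isMeagre_of_isOpen isOpen_univ ⟨(1 : G), mem_univ _⟩ ?_
    rw [hcover]
    exact isMeagre_iUnion' (fun y => of_not_not (by simpa using hno y))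
  obtain ⟨ystar, hynm⟩ := hexy
  obtain ⟨m0, hm0ne, hm0⟩ := exists_cmgIn_of_not_isMeagre U hUb (hBM x ystar) hynm
  obtain ⟨g₀, hg₀u, hg₀A⟩ := hm0.inter_nonempty' (hUo m0) hm0ne
  set z : X := g₀ • x with hz
  have hψz : ψ z = ystar := hg₀A
  have hsetz : hsetS G ψ z = (fun k => k * g₀) ⁻¹' {g : G | ψ (g • x) = ystar} := by
    ext k
    simp only [hsetS, mem_setOf_eq, mem_preimage, hz, smul_smul, hψz]
    rw [← hz, hψz]
  set O : Set G := (fun k : G => k * g₀) ⁻¹' (U m0) with hO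
  have hOopen : IsOpen O := (hUo m0).preimage (continuous_mul_right g₀)
  have h1O : (1 : G) ∈ O := by
    show (1 : G) * g₀ ∈ U m0
    rw [one_mul]; exact hg₀u
  have hcmgO : CmgIn O (hsetS G ψ z) := by
    show IsMeagre (O \ hsetS G ψ z)
    rw [hsetz, hO]
    have heq : ((fun k : G => k * g₀) ⁻¹' (U m0)) \
        ((fun k : G => k * g₀) ⁻¹' {g : G | ψ (g • x) = ystar}) =
        (fun k : G => k * g₀) ⁻¹' ((U m0) \ {g : G | ψ (g • x) = ystar}) := by
      ext k; simp [mem_diff]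
    rw [heq, isMeagre_preimage_mulRight]
    exact hm0
  obtain ⟨V, hVopen, hV1, hVsub⟩ := exists_open_nhds_one_mul_subset (hOopen.mem_nhds h1O)
  obtain ⟨m1, h1m1, hm1V⟩ := hUb V hVopen 1 hV1
  have hVO : V ⊆ O := by
    intro v hv
    have : v * 1 ∈ V * V := mul_mem_mul hv hV1
    rw [mul_one] at this
    exact hVsub this
  have hm1O : U m1 ⊆ O := hm1V.trans hVO
  have hzD : z ∈ Dset G ψ (U m1) := hcmgO.mono_left hm1O
  have hsub : hsetS G ψ z ∩ V ⊆ sset G ψ (Dset G ψ (U m1)) univ z := by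
    rintro g ⟨hgH, hgV⟩
    refine ⟨⟨mem_univ _, ?_⟩, hgH⟩
    -- g • z ∈ Dset
    show CmgIn (U m1) (hsetS G ψ (g • z))
    rw [hsetS_smul (h := g) hgH]
    show IsMeagre (U m1 \ ((fun k : G => k * g) ⁻¹' (hsetS G ψ z)))
    have heq : (fun k : G => k * g) ⁻¹'
        ((((fun k : G => k * g⁻¹) ⁻¹' (U m1))) \ hsetS G ψ z) =
        U m1 \ ((fun k : G => k * g) ⁻¹' (hsetS G ψ z)) := by
      ext k
      simp only [mem_preimage, mem_diff, mul_inv_cancel_right]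
    rw [← heq, isMeagre_preimage_mulRight]
    have hsubO : ((fun k : G => k * g⁻¹) ⁻¹' (U m1)) ⊆ O := by
      intro k hk
      have hk' : k * g⁻¹ ∈ V := hm1V hk
      have : (k * g⁻¹) * g ∈ V * V := mul_mem_mul hk' hgV
      rw [inv_mul_cancel_right] at this
      exact hVsub this
    exact hcmgO.mono (s := O \ hsetS G ψ z) (fun k hk => ⟨hsubO hk.1, hk.2⟩)
  have hVnm : ¬ IsMeagre (hsetS G ψ z ∩ V) := by
    intro hmea
    have hcmgV : CmgIn V (hsetS G ψ z) := hcmgO.mono_left hVO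
    refine not_isMeagre_of_isOpen hVopen ⟨1, hV1⟩ ?_
    refine (isMeagre_union hcmgV hmea).mono (fun v hv => ?_)
    by_cases hvH : v ∈ hsetS G ψ z
    · exact Or.inr ⟨hvH, hv⟩
    · exact Or.inl ⟨hv, hvH⟩
  exact ⟨m1, z, ⟨g₀, rfl⟩, h1m1, hzD, fun hmea => hVnm (hmea.mono hsub)⟩

end Fiber

section Meas

set_option linter.unusedSectionVars false

variable {X Y : Type*} [Group G] [MulAction G X]
variable [MeasurableSpace G] [BorelSpace G] [BaireSpace G]
variable [MeasurableSpace X]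
variable (U : ℕ → Set G)

lemma measurableSet_dset {ψ : X → Y}
    (hUo : ∀ m, IsOpen (U m))
    (hUb : ∀ v : Set G, IsOpen v → ∀ g ∈ v, ∃ m, g ∈ U m ∧ U m ⊆ v)
    (heq : MeasurableSet {p : X × G | ψ (p.2 • p.1) = ψ p.1}) (u : Set G) (m : ℕ)
    (hum : u = U m) : MeasurableSet (Dset G ψ u) := by
  subst hum
  exact measurableSet_cmgIn U hUo hUb heq m

lemma measurableSet_largeSet {ψ : X → Y} {D A : Set X}
    (hUo : ∀ m, IsOpen (U m))
    (hUb : ∀ v : Set G, IsOpen v → ∀ g ∈ v, ∃ m, g ∈ U m ∧ U m ⊆ v)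
    (hsmul : Measurable (fun p : X × G => p.2 • p.1))
    (heq : MeasurableSet {p : X × G | ψ (p.2 • p.1) = ψ p.1})
    (hA : MeasurableSet A) (hD : MeasurableSet D) :
    MeasurableSet {x : X | Large G ψ D A x} := by
  have hP : MeasurableSet {p : X × G | p.2 • p.1 ∈ A ∩ D ∧ ψ (p.2 • p.1) = ψ p.1} :=
    (hsmul (hA.inter hD)).inter heq
  exact measurableSet_not_isMeagre U hUo hUb hP

variable [MetricSpace X] [BorelSpace X]

lemma measurableSet_xs {ψ : X → Y} {D : Set X} {W : ℕ → Set X}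
    (hUo : ∀ m, IsOpen (U m))
    (hUb : ∀ v : Set G, IsOpen v → ∀ g ∈ v, ∃ m, g ∈ U m ∧ U m ⊆ v)
    (hsmul : Measurable (fun p : X × G => p.2 • p.1))
    (heq : MeasurableSet {p : X × G | ψ (p.2 • p.1) = ψ p.1})
    (hWopen : ∀ j, IsOpen (W j)) (hD : MeasurableSet D) :
    ∀ s : List ℕ, MeasurableSet (XS G ψ D W s) := by
  intro s
  induction s with
  | nil =>
    exact measurableSet_largeSet U hUo hUb hsmul heq MeasurableSet.univ hD
  | cons j t ih =>
    have hgood : ∀ j' : ℕ, MeasurableSet (GoodSet G ψ D W t j') := by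
      intro j'
      have : GoodSet G ψ D W t j' =
          {_x : X | geomOK W t j'} ∩ {x : X | Large G ψ D (AS W (j' :: t)) x} := by
        ext x; simp [GoodSet, mem_inter_iff, mem_setOf_eq]
      rw [this]
      exact (measurableSet_setOf_const _).inter
        (measurableSet_largeSet U hUo hUb hsmul heq
          (as_open hWopen (j' :: t)).measurableSet hD)
    show MeasurableSet ((XS G ψ D W t ∩ GoodSet G ψ D W t j) ∩ ⋂ (j' : ℕ) (_ : j' < j), _)
    exact ((ih.inter (hgood j)).inter
      (MeasurableSet.iInter fun j' => MeasurableSet.iInter fun _ => (hgood j').compl))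

lemma measurableSet_tset {ψ : X → Y} {D : Set X} {W : ℕ → Set X}
    (hUo : ∀ m, IsOpen (U m))
    (hUb : ∀ v : Set G, IsOpen v → ∀ g ∈ v, ∃ m, g ∈ U m ∧ U m ⊆ v)
    (hsmul : Measurable (fun p : X × G => p.2 • p.1))
    (heq : MeasurableSet {p : X × G | ψ (p.2 • p.1) = ψ p.1})
    (hWopen : ∀ j, IsOpen (W j)) (hD : MeasurableSet D) :
    MeasurableSet (Tset G ψ D W) := by
  refine ((hD.inter (measurableSet_largeSet U hUo hUb hsmul heq MeasurableSet.univ hD)).inter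
    (MeasurableSet.iInter fun k => ?_))
  refine MeasurableSet.iUnion fun s => MeasurableSet.iUnion fun _ => ?_
  exact (measurableSet_xs U hUo hUb hsmul heq hWopen hD s).inter
    (as_open hWopen s).measurableSet

end Meas

section BallFamily

lemma exists_ball_family (X : Type*) [MetricSpace X] [TopologicalSpace.SeparableSpace X] [Nonempty X] :
    ∃ W : ℕ → Set X, (∀ j, IsOpen (W j)) ∧
      (∀ (A : Set X), IsOpen A → ∀ ε : ℝ, 0 < ε → ∀ z ∈ A,
        ∃ j, z ∈ W j ∧ closure (W j) ⊆ A ∧ Bornology.IsBounded (W j) ∧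
          Metric.diam (W j) ≤ ε) := by
  classical
  let u : ℕ → X := TopologicalSpace.denseSeq X
  have hu : DenseRange u := TopologicalSpace.denseRange_denseSeq X
  refine ⟨fun n => Metric.ball (u ((Denumerable.eqv (ℕ × ℚ)).symm n).1)
    ((((Denumerable.eqv (ℕ × ℚ)).symm n).2 : ℝ)), fun j => Metric.isOpen_ball, ?_⟩
  intro A hA ε hε z hz
  obtain ⟨δ, hδpos, hδ⟩ := Metric.isOpen_iff.mp hA z hz
  set r : ℝ := min (δ/4) (ε/4) with hr
  have hrpos : 0 < r := by
    apply lt_min <;> linarith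
  obtain ⟨q, hq1, hq2⟩ := exists_rat_btwn (show r/2 < r by linarith)
  have hqpos : (0 : ℝ) < (q : ℝ) := lt_trans (by linarith) hq1
  obtain ⟨i, hi⟩ := hu.exists_dist_lt z (show (0:ℝ) < (q : ℝ)/2 by linarith)
  have he : (Denumerable.eqv (ℕ × ℚ)).symm ((Denumerable.eqv (ℕ × ℚ)) (i, q)) = (i, q) :=
    Equiv.symm_apply_apply _ _
  refine ⟨(Denumerable.eqv (ℕ × ℚ)) (i, q), ?_, ?_, ?_, ?_⟩
  · simp only [he]
    exact Metric.mem_ball.mpr (by rw [dist_comm] at hi ⊢; exact lt_trans hi (by linarith))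
  · simp only [he]
    refine subset_trans Metric.closure_ball_subset_closedBall (subset_trans ?_ hδ)
    intro w hw
    have h1 : dist w (u i) ≤ (q : ℝ) := Metric.mem_closedBall.mp hw
    have h2 : dist z (u i) < (q : ℝ)/2 := hi
    have h3 : dist w z ≤ dist w (u i) + dist (u i) z := dist_triangle w (u i) z
    rw [dist_comm (u i) z] at h3
    have hq3 : (q : ℝ) < r := hq2
    have hrδ : r ≤ δ/4 := min_le_left _ _
    exact Metric.mem_ball.mpr (by linarith)
  · simp only [he]
    exact Metric.isBounded_ball
  · simp only [he]
    refine le_trans (Metric.diam_ball (le_of_lt hqpos)) ?_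
    have hq3 : (q : ℝ) < r := hq2
    have hrε : r ≤ ε/4 := min_le_right _ _
    linarith

end BallFamily

section CoreTheorem

set_option maxHeartbeats 1000000 in
theorem core {G X Y : Type*}
    [Group G] [TopologicalSpace G] [IsTopologicalGroup G] [BaireSpace G]
    [MeasurableSpace G] [BorelSpace G]
    [MetricSpace X] [CompleteSpace X] [SecondCountableTopology X]
    [MeasurableSpace X] [BorelSpace X] [MulAction G X]
    (ψ : X → Y)
    (hsmul : Measurable (fun p : X × G => p.2 • p.1))
    (heq : MeasurableSet {p : X × G | ψ (p.2 • p.1) = ψ p.1})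
    (hyBM : ∀ (x : X) (y : Y), BaireMeasurableSet {g : G | ψ (g • x) = y})
    (hfib : ∀ y : X, IsClosed {x' : X | ψ x' = ψ y})
    (U : ℕ → Set G) (hUo : ∀ m, IsOpen (U m))
    (hUb : ∀ v : Set G, IsOpen v → ∀ g ∈ v, ∃ m, g ∈ U m ∧ U m ⊆ v)
    (hDcl : ∀ m, IsClosed (Dset G ψ (U m)))
    (horb : ∀ a b : X, ψ a = ψ b → ∃ g : G, g • a = b)
    (hcnt : ∀ x : X, (ψ '' {x' | ∃ g : G, g • x = x'}).Countable) :
    ∃ (B : ℕ → Set X) (V : ℕ → Set G),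
      (∀ n, MeasurableSet (B n)) ∧
      (∀ n, IsOpen (V n) ∧ (1 : G) ∈ V n) ∧
      (∀ x : X, ∃ y ∈ ⋃ n, B n, ∃ g : G, g • y = x) ∧
      (∀ x : X, ((⋃ n, B n) ∩ {y : X | ∃ g : G, g • x = y}).Countable) ∧
      (∀ n, ∀ x ∈ B n, ∀ y ∈ B n, ∀ g ∈ V n, g • x = y → x = y) := by
  classical
  rcases isEmpty_or_nonempty X with hXe | hXne
  · refine ⟨fun _ => ∅, fun _ => univ, by simp, fun n => ⟨isOpen_univ, mem_univ _⟩,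
      fun x => (IsEmpty.false x).elim, fun x => (IsEmpty.false x).elim, by simp⟩
  obtain ⟨W, hWopen, hWcov⟩ := exists_ball_family X
  refine ⟨fun m => if 1 ∈ U m then Tset G ψ (Dset G ψ (U m)) W else ∅,
          fun m => if 1 ∈ U m then (U m)⁻¹ * (U m) else univ, ?_, ?_, ?_, ?_, ?_⟩
  · -- measurability
    intro n
    by_cases h : 1 ∈ U n
    · simp only [if_pos h]
      exact measurableSet_tset U hUo hUb hsmul heq hWopen
        (measurableSet_dset U hUo hUb heq (U n) n rfl)
    · simp only [if_neg h]; exact MeasurableSet.empty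
  · -- V n open and contains 1
    intro n
    by_cases h : 1 ∈ U n
    · simp only [if_pos h]
      constructor
      · exact IsOpen.mul_left (hUo n)
      · have h1 : (1 : G) ∈ (U n)⁻¹ := by rwa [Set.mem_inv, inv_one]
        have h2 := Set.mul_mem_mul h1 h
        rwa [one_mul] at h2
    · simp only [if_neg h]; exact ⟨isOpen_univ, mem_univ _⟩
  · -- completeness
    intro x
    obtain ⟨m, z, ⟨h, hhz⟩, h1m, hzD, hzL⟩ :=
      exists_good_point U hUo hUb hyBM hcnt x
    obtain ⟨zt, hztT, hψzt⟩ := tset_exists hWopen hWcov (hDcl m) (hfib z) horb hzL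
    refine ⟨zt, mem_iUnion.mpr ⟨m, ?_⟩, ?_⟩
    · simp only [if_pos h1m]; exact hztT
    · obtain ⟨g1, hg1⟩ := horb zt z hψzt
      refine ⟨h⁻¹ * g1, ?_⟩
      rw [mul_smul, hg1, ← hhz, inv_smul_smul]
  · -- countability
    intro x
    set O : Set X := {y : X | ∃ g : G, g • x = y} with hO
    have hsub : ((⋃ n, (fun m => if 1 ∈ U m then Tset G ψ (Dset G ψ (U m)) W else ∅) n) ∩ O) ⊆
        ⋃ n, ((if 1 ∈ U n then Tset G ψ (Dset G ψ (U n)) W else ∅) ∩ O) := by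
      intro w hw
      obtain ⟨n, hn⟩ := mem_iUnion.mp hw.1
      exact mem_iUnion.mpr ⟨n, hn, hw.2⟩
    refine Set.Countable.mono hsub (countable_iUnion (fun n => ?_))
    by_cases h : 1 ∈ U n
    · simp only [if_pos h]
      have hcC : (ψ '' O).Countable := hcnt x
      haveI := hcC.to_subtype
      have hsub2 : Tset G ψ (Dset G ψ (U n)) W ∩ O ⊆
          ⋃ y : (ψ '' O), {w : X | w ∈ Tset G ψ (Dset G ψ (U n)) W ∩ O ∧ ψ w = (y : Y)} := by
        intro w hw
        exact mem_iUnion.mpr ⟨⟨ψ w, ⟨w, hw.2, rfl⟩⟩, hw, rfl⟩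
      refine Set.Countable.mono hsub2 (countable_iUnion (fun y => ?_))
      refine Set.Subsingleton.countable ?_
      rintro w ⟨⟨hwT, _⟩, hwψ⟩ w' ⟨⟨hwT', _⟩, hwψ'⟩
      exact tset_unique horb hwT hwT' (by rw [hwψ, hwψ'])
    · simp only [if_neg h]
      simp
  · -- lacunarity
    intro n x hx y hy g hg hgxy
    by_cases h : 1 ∈ U n
    · simp only [if_pos h] at hx hy
      simp only [if_pos h] at hg
      subst hgxy
      have hsame : ψ (g • x) = ψ x :=
        dset_samefiber (hUo n) hx.1.1 hy.1.1 hg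
      exact tset_unique horb hx hy hsame
    · simp only [if_neg h] at hx
      exact absurd hx (notMem_empty x)

end CoreTheorem

end S16

open Set Topology Filter S16

set_option maxHeartbeats 2000000 in
/-- Main theorem of the paper: every essentially countable orbit equivalence
relation induced by a continuous action of a Polish group on a Polish space is
σ-lacunary. -/
theorem stmt16 {G X : Type*} [Group G] [TopologicalSpace G] [IsTopologicalGroup G]
    [PolishSpace G] [TopologicalSpace X] [PolishSpace X] [MulAction G X]
    [ContinuousSMul G X] [MeasurableSpace X] [BorelSpace X]
    (hEC : ∃ (Y : Type) (_ : TopologicalSpace Y) (_ : PolishSpace Y)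
      (_ : MeasurableSpace Y) (_ : BorelSpace Y) (F : Set (Y × Y)),
      MeasurableSet F ∧
      (∀ y : Y, (y, y) ∈ F) ∧
      (∀ y z : Y, (y, z) ∈ F → (z, y) ∈ F) ∧
      (∀ y z w : Y, (y, z) ∈ F → (z, w) ∈ F → (y, w) ∈ F) ∧
      (∀ y : Y, {z : Y | (y, z) ∈ F}.Countable) ∧
      (∃ ψ : X → Y, Measurable ψ ∧
        ∀ x x' : X, (∃ g : G, g • x = x') ↔ (ψ x, ψ x') ∈ F) ∧
      (∃ θ : Y → X, Measurable θ ∧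
        ∀ y y' : Y, (y, y') ∈ F ↔ ∃ g : G, g • θ y = θ y')) :
    ∃ (B : ℕ → Set X) (V : ℕ → Set G),
      (∀ n, MeasurableSet (B n)) ∧
      (∀ n, IsOpen (V n) ∧ (1 : G) ∈ V n) ∧
      (∀ x : X, ∃ y ∈ ⋃ n, B n, ∃ g : G, g • y = x) ∧
      (∀ x : X, ((⋃ n, B n) ∩ {y : X | ∃ g : G, g • x = y}).Countable) ∧
      (∀ n, ∀ x ∈ B n, ∀ y ∈ B n, ∀ g ∈ V n, g • x = y → x = y) := by
  classical
  rcases isEmpty_or_nonempty X with hXe | hXne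
  · exact ⟨fun _ => ∅, fun _ => univ, by simp, fun n => ⟨isOpen_univ, mem_univ _⟩,
      fun x => (IsEmpty.false x).elim, fun x => (IsEmpty.false x).elim, by simp⟩
  obtain ⟨Y, tY, pY, mY, bYsp, F, hFmeas, hFrefl, hFsymm, hFtrans, hFcnt,
    ⟨ψ, hψm, hψred⟩, -⟩ := hEC
  -- instances
  letI : MeasurableSpace G := borel G
  haveI hBorG : BorelSpace G := ⟨rfl⟩
  haveI hBaireG : BaireSpace G := by
    letI := TopologicalSpace.upgradeIsCompletelyMetrizable G
    exact inferInstance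
  haveI hT2Y : T2Space Y := by
    letI := TopologicalSpace.upgradeIsCompletelyMetrizable Y
    exact inferInstance
  have hYne : Nonempty Y := ⟨ψ hXne.some⟩
  -- countable basis of G
  obtain ⟨bG, hbGc, hbGne, hbGbasis⟩ := TopologicalSpace.exists_countable_basis G
  have hbGnonempty : bG.Nonempty := by
    obtain ⟨v, hvb, -, -⟩ :=
      hbGbasis.exists_subset_of_mem_open (mem_univ (1 : G)) isOpen_univ
    exact ⟨v, hvb⟩
  obtain ⟨U, hU⟩ := hbGc.exists_eq_range hbGnonempty
  have hUo : ∀ m, IsOpen (U m) := fun m =>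
    hbGbasis.isOpen (by rw [hU]; exact mem_range_self m)
  have hUb : ∀ v : Set G, IsOpen v → ∀ g ∈ v, ∃ m, g ∈ U m ∧ U m ⊆ v := by
    intro v hv g hg
    obtain ⟨w, hwb, hgw, hwv⟩ := hbGbasis.exists_subset_of_mem_open hg hv
    rw [hU] at hwb
    obtain ⟨m, rfl⟩ := hwb
    exact ⟨m, hgw, hwv⟩
  -- countable basis of Y
  obtain ⟨bY, hbYc, hbYne, hbYbasis⟩ := TopologicalSpace.exists_countable_basis Y
  have hbYnonempty : bY.Nonempty := by
    obtain ⟨v, hvb, -, -⟩ :=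
      hbYbasis.exists_subset_of_mem_open (mem_univ hYne.some) isOpen_univ
    exact ⟨v, hvb⟩
  obtain ⟨VY, hVY⟩ := hbYc.exists_eq_range hbYnonempty
  have hVYo : ∀ i, IsOpen (VY i) := fun i =>
    hbYbasis.isOpen (by rw [hVY]; exact mem_range_self i)
  have hVYsep : ∀ y1 y2 : Y, y1 ≠ y2 → ∃ i, y1 ∈ VY i ∧ y2 ∉ VY i := by
    intro y1 y2 hne
    obtain ⟨v, hvb, h1v, hvsub⟩ := hbYbasis.exists_subset_of_mem_open
      (show y1 ∈ ({y2}ᶜ : Set Y) by simpa using hne) isOpen_compl_singleton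
    rw [hVY] at hvb
    obtain ⟨i, rfl⟩ := hvb
    exact ⟨i, h1v, fun h2 => (hvsub h2) rfl⟩
  -- measurability of the action and of the equality set
  have hsmul : Measurable (fun p : X × G => p.2 • p.1) := by
    have hc : Continuous (fun p : X × G => p.2 • p.1) := continuous_snd.smul continuous_fst
    exact hc.measurable
  have heq : MeasurableSet {p : X × G | ψ (p.2 • p.1) = ψ p.1} := by
    have hmap : Measurable (fun p : X × G => (ψ (p.2 • p.1), ψ p.1)) :=
      (hψm.comp hsmul).prodMk (hψm.comp measurable_fst)
    have hdiag : MeasurableSet {q : Y × Y | q.1 = q.2} :=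
      isClosed_diagonal.measurableSet
    exact hmap hdiag
  have hyBM : ∀ (x : X) (y : Y), BaireMeasurableSet {g : G | ψ (g • x) = y} := by
    intro x y
    have hc : Continuous (fun g : G => g • x) := continuous_id.smul continuous_const
    have hm : Measurable (fun g : G => ψ (g • x)) := hψm.comp hc.measurable
    exact (hm (measurableSet_singleton y)).baireMeasurableSet
  -- derived orbit facts
  have horb : ∀ a b : X, ψ a = ψ b → ∃ g : G, g • a = b := by
    intro a b hab
    exact (hψred a b).mpr (hab ▸ hFrefl (ψ a))
  have hcnt : ∀ x : X, (ψ '' {x' | ∃ g : G, g • x = x'}).Countable := by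
    intro x
    refine (hFcnt (ψ x)).mono ?_
    rintro y ⟨x', hx', rfl⟩
    exact (hψred x x').mp hx'
  -- key fact: any finer Polish topology has the same Borel σ-algebra
  have pX0 := ‹PolishSpace X›
  have hbx := ‹BorelSpace X›.measurable_eq
  -- the family of sets to clopenize
  set fam : ℕ ⊕ ℕ → Set X := Sum.elim (fun m => Dset G ψ (U m)) (fun i => ψ ⁻¹' (VY i))
    with hfam
  have hfammeas : ∀ k, MeasurableSet (fam k) := by
    rintro (m | i)
    · exact measurableSet_dset U hUo hUb heq (U m) m rfl
    · exact hψm ((hVYo i).measurableSet)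
  have hfamclop : ∀ k, PolishSpace.IsClopenable (fam k) := fun k => (hfammeas k).isClopenable
  choose tfun htle htpol htcl hto using hfamclop
  obtain ⟨t', ht'le, ht'leτ, ht'pol⟩ := PolishSpace.exists_polishSpace_forall_le tfun htle htpol
  have hDcl' : ∀ n, IsClosed[t'] (Dset G ψ (U n)) := fun n =>
    (htcl (Sum.inl n)).mono (ht'le (Sum.inl n))
  have hfo' : ∀ i, IsOpen[t'] (ψ ⁻¹' (VY i)) := fun i =>
    (hto (Sum.inr i)).mono (ht'le (Sum.inr i))
  have hfib' : ∀ y : X, IsClosed[t'] {x' : X | ψ x' = ψ y} := by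
    intro y
    have heqset : {x' : X | ψ x' = ψ y} =
        ⋂ (i : ℕ) (_ : ψ y ∉ VY i), (ψ ⁻¹' (VY i))ᶜ := by
      ext x'
      simp only [mem_setOf_eq, mem_iInter, mem_compl_iff, mem_preimage]
      constructor
      · intro h i hi hx'
        exact hi (h ▸ hx')
      · intro h
        by_contra hne
        obtain ⟨i, h1, h2⟩ := hVYsep (ψ x') (ψ y) hne
        exact h i h2 h1
    rw [heqset]
    exact isClosed_iInter (fun i => isClosed_iInter (fun _ => (hfo' i).isClosed_compl))
  -- Borel structure is unchanged
  have hBorelX' : @BorelSpace X t' ‹MeasurableSpace X› := by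
    constructor
    rw [hbx]
    exact (MeasureTheory.borel_eq_borel_of_le ht'pol pX0 ht'leτ).symm
  -- upgrade t' to a complete metric
  haveI hP' : @PolishSpace X t' := ht'pol
  let MX : MetricSpace X := @TopologicalSpace.completelyMetrizableMetric X t' hP'.toIsCompletelyMetrizableSpace
  have htop : MX.toUniformSpace.toTopologicalSpace = t' := by
    have h1 : MX = hP'.complete.choose :=
      MetricSpace.replaceTopology_eq _ _
    rw [h1]
    exact hP'.complete.choose_spec.1
  have hcompl : @CompleteSpace X MX.toUniformSpace := @TopologicalSpace.complete_completelyMetrizableMetric X t' hP'.toIsCompletelyMetrizableSpace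
  have hsc : @SecondCountableTopology X MX.toUniformSpace.toTopologicalSpace := by
    rw [htop]
    exact hP'.toSecondCountableTopology
  have hBorelM : @BorelSpace X MX.toUniformSpace.toTopologicalSpace ‹MeasurableSpace X› := by
    rw [htop]
    exact hBorelX'
  have hDclM : ∀ n, @IsClosed X MX.toUniformSpace.toTopologicalSpace (Dset G ψ (U n)) := by
    rw [htop]
    exact hDcl'
  have hfibM : ∀ y : X, @IsClosed X MX.toUniformSpace.toTopologicalSpace {x' : X | ψ x' = ψ y} := by
    rw [htop]
    exact hfib'
  exact @core G X Y _ _ _ hBaireG _ hBorG MX hcompl hsc _ hBorelM _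
    ψ hsmul heq hyBM hfibM U hUo hUb hDclM horb hcnt
end
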